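/- Elementary symmetric functions of the b-deformed Jucys–Murphy operators: Let k ≥ 1 and 0 ≤ r ≤ k. In the free ℤ[b]-module with basis 𝒫_k, Σ_{k ≥ i_1 > i_2 > ⋯ > i_r ≥ 1} 𝒥_{i_1} 𝒥_{i_2} ⋯ 𝒥_{i_r} (𝔢_k) = Σ_{λ ⊢ k, ℓ(λ) = k−r} 𝔭_λ, where the sum on the right is over partitions λ of k with exactly k−r parts. -/

import Mathlib

open scoped Classical
open MeasureTheory



/-- A pair partition of `{1, …, 2k}`, encoded as an involution of `ℕ` that
moves exactly the points `1, …, 2k`.  The pairs are the two-element sets `{a, f a}`. -/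
structure PairPartition (k : ℕ) where
  f : ℕ → ℕ
  invol : ∀ a, f (f a) = a
  moves : ∀ a, f a ≠ a ↔ (1 ≤ a ∧ a ≤ 2 * k)

namespace PairPartition

/-- The function underlying the identity (trivial) pair partition
`(1 2 | 3 4 | ⋯ | 2k-1 2k)`. -/
def trivFun (k : ℕ) (a : ℕ) : ℕ :=
  if 1 ≤ a ∧ a ≤ 2 * k then (if a % 2 = 1 then a + 1 else a - 1) else a

/-- The identity pair partition `𝔢_k = (1 2 | 3 4 | ⋯ | 2k-1 2k)`. -/
def triv (k : ℕ) : PairPartition k where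
  f := trivFun k
  invol := by intro a; unfold trivFun; split_ifs <;> omega
  moves := by intro a; unfold trivFun; split_ifs <;> omega

theorem ext' {k : ℕ} {m m' : PairPartition k} (h : m.f = m'.f) : m = m' := by
  cases m; cases m'; simpa using h

/-- The action of the transposition `(i j) ∈ S_{2k}` on pair partitions of `{1, …, 2k}`
(defined to do nothing if `i` or `j` lies outside `{1, …, 2k}`). -/
def swapAct {k : ℕ} (i j : ℕ) (m : PairPartition k) : PairPartition k :=
  if h : 1 ≤ i ∧ i ≤ 2 * k ∧ 1 ≤ j ∧ j ≤ 2 * k then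
    { f := fun a => Equiv.swap i j (m.f (Equiv.swap i j a))
      invol := by intro a; simp [m.invol]
      moves := by
        obtain ⟨hi1, hi2, hj1, hj2⟩ := h
        intro a
        have key : ∀ x y : ℕ, Equiv.swap i j x ≠ y ↔ x ≠ Equiv.swap i j y := by
          intro x y
          constructor
          · intro hxy hc; apply hxy; rw [hc]; simp
          · intro hxy hc; apply hxy; rw [← hc]; simp
        rw [key, ← Equiv.swap_apply_self i j a, Equiv.swap_apply_self i j a]
        rw [m.moves (Equiv.swap i j a)]
        rcases eq_or_ne a i with rfl | hai
        · rw [Equiv.swap_apply_left]; omega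
        rcases eq_or_ne a j with rfl | haj
        · rw [Equiv.swap_apply_right]; omega
        · rw [Equiv.swap_apply_of_ne_of_ne hai haj] }
  else m

/-- Removing the pair `{2k-1, 2k}` from a pair partition: the operation `𝔪 ↦ 𝔪↓`
(defined to return the trivial pair partition if `{2k-1, 2k} ∉ 𝔪`). -/
def down {k : ℕ} (m : PairPartition k) : PairPartition (k - 1) :=
  if h : m.f (2 * k - 1) = 2 * k then
    { f := fun a => if a = 2 * k - 1 ∨ a = 2 * k then a else m.f a
      invol := by
        intro a
        by_cases ha : a = 2 * k - 1 ∨ a = 2 * k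
        · simp [ha]
        · have h2k : m.f (2 * k) = 2 * k - 1 := by
            conv_lhs => rw [← h]
            exact m.invol _
          have hne1 : m.f a ≠ 2 * k - 1 := by
            intro hfa
            have h1 : m.f (m.f a) = m.f (2 * k - 1) := by rw [hfa]
            rw [m.invol, h] at h1
            exact ha (Or.inr h1)
          have hne2 : m.f a ≠ 2 * k := by
            intro hfa
            have h1 : m.f (m.f a) = m.f (2 * k) := by rw [hfa]
            rw [m.invol, h2k] at h1
            exact ha (Or.inl h1)
          simp only [if_neg ha, if_neg (not_or.mpr ⟨hne1, hne2⟩), m.invol]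
      moves := by
        intro a
        by_cases ha : a = 2 * k - 1 ∨ a = 2 * k
        · simp only [if_pos ha]
          rcases ha with ha | ha <;> subst ha <;> constructor <;> intro h' <;> first
            | exact absurd rfl h'
            | omega
        · push_neg at ha
          obtain ⟨ha1, ha2⟩ := ha
          simp only [if_neg (not_or.mpr ⟨ha1, ha2⟩)]
          rw [m.moves a]
          omega }
  else triv (k - 1)

/-- A pair partition as a permutation (involution) of `ℕ`. -/
def perm {k : ℕ} (m : PairPartition k) : Equiv.Perm ℕ :=
  Function.Involutive.toPerm m.f m.invol

end PairPartition

namespace PairPartition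

/-- The connected component (cycle) of the multigraph `Γ(𝔪)` containing a vertex `v`:
the orbit of `v` under the group generated by the involutions `𝔢_k` and `𝔪`. -/
def gammaOrbit {k : ℕ} (m : PairPartition k) (v : ℕ) : Set ℕ :=
  MulAction.orbit (Subgroup.closure {(triv k).perm, m.perm} : Subgroup (Equiv.Perm ℕ)) v

/-- The charge function of `Γ(𝔪)`: `charge m v` holds iff `v` receives charge `+`,
i.e. iff `v` is at even distance (in `Γ(𝔪)`) from the largest label of its cycle.
The vertices at even distance from the largest label `M` of a cycle are exactly the
orbit of `M` under the cyclic group generated by `𝔪 ∘ 𝔢_k`. -/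
def charge {k : ℕ} (m : PairPartition k) (v : ℕ) : Prop :=
  v ∈ MulAction.orbit (Subgroup.zpowers (m.perm * (triv k).perm) : Subgroup (Equiv.Perm ℕ))
        (sSup (gammaOrbit m v))

/-- The weight `ω^(b)(𝔪, (i j)·𝔪)` attached to the transposition `(i j)` acting on `𝔪`:
it is `1` if the charges of `i` and `j` in `Γ(𝔪)` agree, and `b` otherwise. -/
noncomputable def omegab {R : Type*} [CommRing R] (b : R) {k : ℕ}
    (m : PairPartition k) (i j : ℕ) : R :=
  if (charge m i ↔ charge m j) then 1 else b

/-- The number of cycles of `Γ(𝔪)` of length `2ℓ`, i.e. the multiplicity of `ℓ`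
in the coset-type `λ(𝔪)` of `𝔪`. -/
noncomputable def cycleCount {k : ℕ} (m : PairPartition k) (ℓ : ℕ) : ℕ :=
  (((Finset.Icc 1 (2 * k)).filter fun a => (gammaOrbit m a).ncard = 2 * ℓ).card) / (2 * ℓ)

/-- Two pair partitions have the same coset-type iff `Γ(𝔪)` and `Γ(𝔪')` have the same
number of cycles of every length. -/
def SameCosetType {k : ℕ} (m m' : PairPartition k) : Prop :=
  ∀ ℓ : ℕ, cycleCount m ℓ = cycleCount m' ℓ

/-- The pair partition `𝔪` has coset-type the multiset `μ` (a partition of `k`,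
presented as the multiset of its parts). -/
def HasCosetType {k : ℕ} (m : PairPartition k) (μ : Multiset ℕ) : Prop :=
  ∀ ℓ : ℕ, 1 ≤ ℓ → μ.count ℓ = cycleCount m ℓ

/-- All lists of length `n` with entries in the finset `S`. -/
def listsLen (S : Finset (ℕ × ℕ)) : ℕ → Finset (List (ℕ × ℕ))
  | 0 => {[]}
  | n + 1 => (S ×ˢ listsLen S n).image fun p => p.1 :: p.2

/-- Apply a sequence `τ = (τ_1, …, τ_r)` of transpositions (each encoded as a pair)
to a pair partition, the rightmost transposition acting first:
`τ_1 ∘ τ_2 ∘ ⋯ ∘ τ_r · 𝔪`. -/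
def applyFacts {k : ℕ} (l : List (ℕ × ℕ)) (m : PairPartition k) : PairPartition k :=
  l.foldr (fun t acc => swapAct t.1 t.2 acc) m

/-- `l` is a monotone factorisation of the pair partition `𝔪 ∈ 𝒫_k`: a sequence of
transpositions `(a_s b_s)` with `a_s < b_s`, all `b_s` odd, `b_1 ≤ b_2 ≤ ⋯ ≤ b_r`,
and `τ_1 ∘ ⋯ ∘ τ_r · 𝔪 = 𝔢_k`. -/
def IsMonoFact {k : ℕ} (m : PairPartition k) (l : List (ℕ × ℕ)) : Prop :=
  (∀ t ∈ l, 1 ≤ t.1 ∧ t.1 < t.2 ∧ t.2 ≤ 2 * k ∧ Odd t.2) ∧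
  List.Pairwise (· ≤ ·) (l.map Prod.snd) ∧
  applyFacts l m = triv k

/-- The hive number of a monotone factorisation: the number of distinct values among
`b_1, …, b_r`. -/
def hive (l : List (ℕ × ℕ)) : ℕ := (l.map Prod.snd).toFinset.card

/-- The flip number of a monotone factorisation `τ` of `𝔪`: the number of indices `s`
with `ω^(b)(𝔪^(s), τ_s · 𝔪^(s)) = b`, where `𝔪^(s) = τ_{s+1} ∘ ⋯ ∘ τ_r · 𝔪`. -/
noncomputable def flip {k : ℕ} (m : PairPartition k) : List (ℕ × ℕ) → ℕ
  | [] => 0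
  | t :: rest =>
      (if (charge (applyFacts rest m) t.1 ↔ charge (applyFacts rest m) t.2) then 0 else 1)
        + flip m rest

/-- The finset of monotone factorisations of `𝔪 ∈ 𝒫_k` of length `r`. -/
noncomputable def monoFinset {k : ℕ} (m : PairPartition k) (r : ℕ) : Finset (List (ℕ × ℕ)) :=
  (listsLen ((Finset.Icc 1 (2 * k)) ×ˢ (Finset.Icc 1 (2 * k))) r).filter fun l => IsMonoFact m l

/-- A sequence of transpositions is connected (relative to level `k`) if together with the
involution `ι = (1 2)(3 4)⋯(2k-1 2k)` it generates a subgroup acting transitively on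
`{1, …, 2k}`. -/
def IsConnectedFact (k : ℕ) (l : List (ℕ × ℕ)) : Prop :=
  ∀ a ∈ Finset.Icc 1 (2 * k), ∀ b ∈ Finset.Icc 1 (2 * k),
    ∃ σ ∈ Subgroup.closure
        ({(triv k).perm} ∪ {p : Equiv.Perm ℕ | ∃ t ∈ l, p = Equiv.swap t.1 t.2}),
      σ a = b

end PairPartition


noncomputable instance matrixMeasurableSpace {N : ℕ} :
    MeasurableSpace (Matrix (Fin N) (Fin N) ℝ) :=
  inferInstanceAs (MeasurableSpace (Fin N → Fin N → ℝ))

/-- The compact group `O(N)` of real orthogonal `N × N` matrices. -/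
abbrev OrthGroup (N : ℕ) := Matrix.orthogonalGroup (Fin N) ℝ

noncomputable instance orthMeasurableSpace {N : ℕ} : MeasurableSpace (OrthGroup N) :=
  borel _

/-- The diagonal matrix `I_{M,N}` whose first `M` diagonal entries are `1` and whose
remaining entries are `0`. -/
def IMN (N M : ℕ) : Matrix (Fin N) (Fin N) ℝ :=
  Matrix.diagonal fun p => if (p : ℕ) < M then (1 : ℝ) else 0

/-- The map `O ↦ O · I_{M,N} · Oᵀ` from `O(N)` onto the space `A(M,N)` of idempotent
real symmetric `N × N` matrices of rank `M`. -/
def grassMap (N M : ℕ) (O : OrthGroup N) : Matrix (Fin N) (Fin N) ℝ :=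
  (O : Matrix (Fin N) (Fin N) ℝ) * IMN N M * Matrix.transpose (O : Matrix (Fin N) (Fin N) ℝ)


/-- The product `A_{i(1)i(2)} A_{i(3)i(4)} ⋯ A_{i(2k-1)i(2k)}` of matrix entries. -/
def prodEntries {N : ℕ} (k : ℕ) (i : ℕ → Fin N) (A : Matrix (Fin N) (Fin N) ℝ) : ℝ :=
  ∏ a ∈ Finset.range k, A (i (2 * a + 1)) (i (2 * a + 2))



open PairPartition


/-- A step in the (`b`- or `bt`-) Weingarten graph: a type-A edge `𝔪 → (i 2k-1)·𝔪`,
a type-B edge `𝔪 → 𝔪↓`, or a type-C edge `𝔪 → ((i 2k-1)·𝔪)↓`. -/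
inductive WStep where
  | A (i : ℕ) : WStep
  | B : WStep
  | C (i : ℕ) : WStep
deriving DecidableEq

/-- `IsPathTo k 𝔪 ρ` holds iff `ρ` is a path in the `bt`-Weingarten graph from the
pair partition `𝔪 ∈ 𝒫_k` to the empty pair partition. -/
def IsPathTo : (k : ℕ) → PairPartition k → List WStep → Prop
  | 0, _, [] => True
  | _ + 1, _, [] => False
  | 0, _, _ :: _ => False
  | k + 1, m, WStep.A i :: ρ =>
      1 ≤ i ∧ i ≤ 2 * (k + 1) - 2 ∧ IsPathTo (k + 1) (swapAct i (2 * (k + 1) - 1) m) ρ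
  | k + 1, m, WStep.B :: ρ =>
      m.f (2 * (k + 1) - 1) = 2 * (k + 1) ∧ IsPathTo k (down m) ρ
  | k + 1, m, WStep.C i :: ρ =>
      1 ≤ i ∧ i ≤ 2 * (k + 1) - 2 ∧ m.f i = 2 * (k + 1) ∧
        IsPathTo k (down (swapAct i (2 * (k + 1) - 1) m)) ρ

/-- The product of the `b`-dependent edge weights along a path. -/
noncomputable def pathWeight {R : Type*} [CommRing R] (b : R) :
    (k : ℕ) → PairPartition k → List WStep → R
  | _, _, [] => 1
  | 0, _, _ :: _ => 1
  | k + 1, m, WStep.A i :: ρ =>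
      omegab b m i (2 * (k + 1) - 1) * pathWeight b (k + 1) (swapAct i (2 * (k + 1) - 1) m) ρ
  | k + 1, m, WStep.B :: ρ => pathWeight b k (down m) ρ
  | k + 1, m, WStep.C i :: ρ => pathWeight b k (down (swapAct i (2 * (k + 1) - 1) m)) ρ

/-- The number of type-A edges of a path. -/
def countA (l : List WStep) : ℕ :=
  (l.filter fun s => match s with | WStep.A _ => true | _ => false).length

/-- The number of type-B edges of a path. -/
def countB (l : List WStep) : ℕ :=
  (l.filter fun s => match s with | WStep.B => true | _ => false).length

/-- The number of type-C edges of a path. -/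
def countC (l : List WStep) : ℕ :=
  (l.filter fun s => match s with | WStep.C _ => true | _ => false).length

/-- The `b`-Weingarten function `Wg^(b)(𝔪) ∈ ℤ[b]⟦X⟧`: the coefficient of `X^n` is the
sum of `(-1)^{ℓ_A(ρ)} w(ρ)` over all paths `ρ` (with no type-C edges, i.e. paths in the
`b`-Weingarten graph) from `𝔪` to the empty pair partition with `ℓ_A(ρ) + ℓ_B(ρ) = n`.
Here `b` is the polynomial variable of `ℤ[b]`. -/
noncomputable def WgB (k : ℕ) (m : PairPartition k) : PowerSeries (Polynomial ℤ) :=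
  PowerSeries.mk fun n =>
    ∑ᶠ (ρ : List WStep)
      (_ : IsPathTo k m ρ ∧ (∀ i, WStep.C i ∉ ρ) ∧ countA ρ + countB ρ = n),
      (-1 : Polynomial ℤ) ^ countA ρ * pathWeight (Polynomial.X : Polynomial ℤ) k m ρ

/-- The `bt`-Weingarten function `Wg^(bt)(𝔪) ∈ (ℤ[b,y])⟦X⟧`: the coefficient of `X^n` is
the sum of `(-1)^{ℓ_A(ρ)} y^{ℓ_B(ρ)} w(ρ)` over all paths `ρ` in the `bt`-Weingarten graph
from `𝔪` to the empty pair partition with `ℓ_A(ρ) + ℓ_C(ρ) = n`.  Here `b = X 0` and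
`y = X 1` in `ℤ[b,y] = MvPolynomial (Fin 2) ℤ`. -/
noncomputable def WgBT (k : ℕ) (m : PairPartition k) :
    PowerSeries (MvPolynomial (Fin 2) ℤ) :=
  PowerSeries.mk fun n =>
    ∑ᶠ (ρ : List WStep) (_ : IsPathTo k m ρ ∧ countA ρ + countC ρ = n),
      (-1 : MvPolynomial (Fin 2) ℤ) ^ countA ρ * (MvPolynomial.X 1) ^ countB ρ *
        pathWeight (MvPolynomial.X 0 : MvPolynomial (Fin 2) ℤ) k m ρ

/-- The standard basis vector `𝔪` of the free module with basis `𝒫_k`,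
realised as functions `𝒫_k → R`. -/
noncomputable def basisVec {R : Type*} [CommRing R] (k : ℕ) (m : PairPartition k) :
    PairPartition k → R :=
  fun n => if n = m then 1 else 0

/-- The `b`-deformed Jucys–Murphy operator `𝒥_i` acting on the free module with basis
`𝒫_k` (realised as functions `𝒫_k → R`): on basis vectors,
`𝒥_i(𝔪) = ∑_{a=1}^{2i-2} ω^(b)((a 2i-1)·𝔪, 𝔪) · (a 2i-1)·𝔪`. -/
noncomputable def JbOp {R : Type*} [CommRing R] (b : R) {k : ℕ} (i : ℕ)
    (v : PairPartition k → R) : PairPartition k → R :=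
  fun n => ∑ a ∈ Finset.Icc 1 (2 * i - 2),
    omegab b n a (2 * i - 1) * v (swapAct a (2 * i - 1) n)

/-- The (odd) Jucys–Murphy element `J_{2i-1} = ∑_{a=1}^{2i-2} (a
 2i-1)` of the group
algebra of `S_{2k}`, acting on the free module with basis `𝒫_k` via the linear extension
of the `S_{2k}`-action on pair partitions. -/
noncomputable def JoddOp {R : Type*} [CommRing R] {k : ℕ} (i : ℕ)
    (v : PairPartition k → R) : PairPartition k → R :=
  fun n => ∑ a ∈ Finset.Icc 1 (2 * i - 2), v (swapAct a (2 * i - 1) n)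

/-- The vector `𝔭_μ = ∑_{𝔪 : λ(𝔪) = μ} 𝔪`, i.e. the indicator function of the set of
pair partitions of coset-type `μ`. -/
noncomputable def pVec {R : Type*} [CommRing R] (k : ℕ) (μ : Multiset ℕ) :
    PairPartition k → R :=
  fun m => if HasCosetType m μ then 1 else 0

noncomputable def applyPows {R : Type*} [CommRing R] (b : R) {k : ℕ} :
    List (ℕ × ℕ) → (PairPartition k → R) → (PairPartition k → R)
  | [], v => v
  | ia :: rest, v => (JbOp b ia.1)^[ia.2] (applyPows b rest v)


/-- The coefficient ring `ℤ[b,y]⟦X⟧`, with `b = X 0` and `y = X 1`. -/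
abbrev SeriesRing := PowerSeries (MvPolynomial (Fin 2) ℤ)

noncomputable def bS : SeriesRing := PowerSeries.C (MvPolynomial.X 0)
noncomputable def yS : SeriesRing := PowerSeries.C (MvPolynomial.X 1)

/-- The operator-valued power series `(1 + X·𝒥_i)⁻¹ = ∑_{j ≥ 0} (-X)^j 𝒥_i^j`
applied to a vector `v`, computed coefficientwise. -/
noncomputable def invApply (k : ℕ) (i : ℕ) (v : PairPartition k → SeriesRing) :
    PairPartition k → SeriesRing :=
  fun n => PowerSeries.mk fun d =>
    ∑ᶠ j : ℕ, PowerSeries.coeff d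
      ((-(PowerSeries.X : SeriesRing)) ^ j * ((JbOp bS i)^[j] v) n)

/-- The vector `(y + X𝒥_j)(1 + X𝒥_j)⁻¹ ⋯ (y + X𝒥_1)(1 + X𝒥_1)⁻¹ (𝔢_k)`. -/
noncomputable def prodVec (k : ℕ) : ℕ → (PairPartition k → SeriesRing)
  | 0 => fun n => if n = triv k then 1 else 0
  | j + 1 => fun n =>
      yS * invApply k (j + 1) (prodVec k j) n +
        PowerSeries.X * (JbOp bS (j + 1) (invApply k (j + 1) (prodVec k j))) n


open MvPolynomial

/-- The formal partial derivative `∂_n = ∂/∂p_n` on the polynomial ring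
`K[p_1, p_2, …]` (the variables being indexed by positive naturals);
junk value `0` for `n = 0`. -/
noncomputable def pd (K : Type*) [CommRing K] (n : ℕ) :
    MvPolynomial ℕ+ K →ₗ[K] MvPolynomial ℕ+ K :=
  if h : 0 < n then (pderiv (⟨n, h⟩ : ℕ+)).toLinearMap else 0

/-- The variable `p_n` of `K[p_1, p_2, …]`; junk value `0` for `n = 0`. -/
noncomputable def pvar (K : Type*) [CommRing K] (n : ℕ) : MvPolynomial ℕ+ K :=
  if h : 0 < n then X ⟨n, h⟩ else 0

section SumOp

variable (K : Type*) [CommRing K]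

lemma sumOp_support_subset (m : ℕ) (f : MvPolynomial ℕ+ K) :
    (Function.support fun i => ((i + m : ℕ) : K) • (pvar K i * pd K (i + m) f)) ⊆
      ((fun i => i + m) ⁻¹' ↑(f.vars.image (fun v : ℕ+ => (v : ℕ)))) := by
  intro i hi
  simp only [Function.mem_support] at hi
  by_contra hmem
  apply hi
  rcases Nat.eq_zero_or_pos (i + m) with h0 | h0
  · have hi0 : i = 0 := by omega
    subst hi0
    simp [pvar]
  · have hnot : (⟨i + m, h0⟩ : ℕ+) ∉ f.vars := by
      intro hv
      apply hmem
      simp only [Set.mem_preimage, Finset.coe_image, Set.mem_image, Finset.mem_coe]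
      exact ⟨⟨i + m, h0⟩, hv, rfl⟩
    have hz : pd K (i + m) f = 0 := by
      have hpd : pd K (i + m) = (pderiv (⟨i + m, h0⟩ : ℕ+)).toLinearMap := by
        unfold pd; exact dif_pos h0
      have := pderiv_eq_zero_of_notMem_vars (R := K) hnot
      rw [hpd]; exact this
    rw [hz, mul_zero, smul_zero]

lemma sumOp_support_finite (m : ℕ) (f : MvPolynomial ℕ+ K) :
    (Function.support fun i => ((i + m : ℕ) : K) • (pvar K i * pd K (i + m) f)).Finite := by
  apply Set.Finite.subset _ (sumOp_support_subset K m f)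
  apply Set.Finite.preimage
  · exact (add_left_injective m).injOn
  · exact (f.vars.image (fun v : ℕ+ => (v : ℕ))).finite_toSet

/-- The operator `∑_{i ≥ 1} (i+m) p_i ∂_{i+m}` on `K[p_1, p_2, …]`
(a well-defined linear operator, the sum being locally finite on polynomials). -/
noncomputable def sumOp (m : ℕ) : MvPolynomial ℕ+ K →ₗ[K] MvPolynomial ℕ+ K where
  toFun f := ∑ᶠ i : ℕ, ((i + m : ℕ) : K) • (pvar K i * pd K (i + m) f)
  map_add' x y := by
    have key : ∀ i : ℕ, ((i + m : ℕ) : K) • (pvar K i * pd K (i + m) (x + y)) =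
        ((i + m : ℕ) : K) • (pvar K i * pd K (i + m) x) +
          ((i + m : ℕ) : K) • (pvar K i * pd K (i + m) y) := by
      intro i
      rw [map_add, mul_add, smul_add]
    rw [finsum_congr key]
    exact finsum_add_distrib (sumOp_support_finite K m x) (sumOp_support_finite K m y)
  map_smul' c x := by
    have key : ∀ i : ℕ, ((i + m : ℕ) : K) • (pvar K i * pd K (i + m) (c • x)) =
        c • (((i + m : ℕ) : K) • (pvar K i * pd K (i + m) x)) := by
      intro i
      rw [_root_.map_smul, smul_comm]
      congr 1
      rw [mul_smul_comm]
    rw [finsum_congr key]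
    simp only [RingHom.id_apply]
    exact (smul_finsum' c (sumOp_support_finite K m x)).symm
end SumOp

/-- The `bt`-deformed Virasoro-type operator `L_m` of Theorem 3.5/4.7, acting on the
polynomial ring `K[p_1, p_2, …]`. -/
noncomputable def Lop (K : Type*) [CommRing K] (b t z hbar : K) (m : ℕ) :
    MvPolynomial ℕ+ K →ₗ[K] MvPolynomial ℕ+ K :=
  (((m : K) * Ring.inverse hbar) • pd K m)
    - (1 + b) • (∑ i ∈ Finset.Ioo 0 m,
        (((i : ℕ) : K) * (((m - i : ℕ)) : K)) • (pd K i ∘ₗ pd K (m - i)))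
    - sumOp K m
    - ((b * (m : K) * ((m - 1 : ℕ) : K)) • pd K m)
    - ((z * Ring.inverse hbar * (t - 1) * ((m - 1 : ℕ) : K)) • pd K (m - 1))
    - (if m = 1 then (z * Ring.inverse hbar * Ring.inverse hbar * Ring.inverse (1 + b)) •
        (LinearMap.id : MvPolynomial ℕ+ K →ₗ[K] MvPolynomial ℕ+ K) else 0)
open PairPartition

/-- `i : {1,…,2k} → {1,…,N}` is admissible for `𝔪`: `{a,b} ∈ 𝔪` implies `i a = i b`. -/
def Admissible {N : ℕ} (k : ℕ) (m : PairPartition k) (i : ℕ → Fin N) : Prop :=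
  ∀ a, 1 ≤ a → a ≤ 2 * k → i (m.f a) = i a

/-- `i : {1,…,2k} → {1,…,N}` is strongly admissible for `𝔪`:
for `a, b ∈ {1,…,2k}`, `i a = i b` holds iff `a = b` or `{a,b} ∈ 𝔪`. -/
def StronglyAdmissible {N : ℕ} (k : ℕ) (m : PairPartition k) (i : ℕ → Fin N) : Prop :=
  ∀ a b, 1 ≤ a → a ≤ 2 * k → 1 ≤ b → b ≤ 2 * k → (i a = i b ↔ (a = b ∨ m.f a = b))

/-- `ĥ^{(t)}_r(𝔪)` evaluated at a real number `t`: the weighted count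
`∑_{τ ∈ Mono(𝔪), ℓ(τ) = r} t^{hive(τ)}`. -/
noncomputable def hiveSum {k : ℕ} (m : PairPartition k) (r : ℕ) (t : ℝ) : ℝ :=
  ∑ l ∈ monoFinset m r, t ^ hive l

/-- The `bt`-monotone count `∑_{τ ∈ Mono(𝔪), ℓ(τ) = r} b^{flip(τ)} t^{hive(τ)}`
in `ℤ[b,t]`, with `b = X 0` and `t = X 1`. -/
noncomputable def btSum {k : ℕ} (m : PairPartition k) (r : ℕ) : MvPolynomial (Fin 2) ℤ :=
  ∑ l ∈ monoFinset m r,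
    (MvPolynomial.X 0 : MvPolynomial (Fin 2) ℤ) ^ (flip m l) *
      (MvPolynomial.X 1) ^ (hive l)

/-- The connected `bt`-monotone count
`∑_{τ ∈ CMono(𝔪), ℓ(τ) = r} b^{flip(τ)} t^{hive(τ)}` in `ℚ[b,t]`,
with `b = X 0` and `t = X 1`. -/
noncomputable def cMonoSum {k : ℕ} (m : PairPartition k) (r : ℕ) : MvPolynomial (Fin 2) ℚ :=
  ∑ l ∈ (monoFinset m r).filter (fun l => IsConnectedFact k l),
    (MvPolynomial.X 0 : MvPolynomial (Fin 2) ℚ) ^ (flip m l) *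
      (MvPolynomial.X 1) ^ (hive l)

/-- The operator `c + J_{2i-1}` on the free module with basis `𝒫_k`. -/
noncomputable def affJoddOp {k : ℕ} (c : ℝ) (i : ℕ) (v : PairPartition k → ℝ) :
    PairPartition k → ℝ :=
  fun n => c * v n + JoddOp i v n


namespace PairPartition

variable {k : ℕ}

lemma f_range (m : PairPartition k) {a : ℕ} (h1 : 1 ≤ a) (h2 : a ≤ 2*k) :
    1 ≤ m.f a ∧ m.f a ≤ 2*k := by
  by_contra hc
  have h3 : m.f (m.f a) = m.f a := by
    by_contra h4
    exact hc ((m.moves (m.f a)).mp h4)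
  rw [m.invol] at h3
  exact ((m.moves a).mpr ⟨h1, h2⟩) h3.symm

lemma f_ne (m : PairPartition k) {a : ℕ} (h1 : 1 ≤ a) (h2 : a ≤ 2*k) : m.f a ≠ a :=
  (m.moves a).mpr ⟨h1, h2⟩

lemma f_fix (m : PairPartition k) {a : ℕ} (h : ¬ (1 ≤ a ∧ a ≤ 2*k)) : m.f a = a := by
  by_contra h'
  exact h ((m.moves a).mp h')

lemma f_inj (m : PairPartition k) {a b : ℕ} (h : m.f a = m.f b) : a = b := by
  rw [← m.invol a, h, m.invol]

@[simp] lemma perm_apply (m : PairPartition k) (x : ℕ) : m.perm x = m.f x := rfl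

lemma perm_mul_self (m : PairPartition k) : m.perm * m.perm = 1 := by
  ext x
  simp [m.invol]

lemma triv_f (x : ℕ) : (triv k).f x = trivFun k x := rfl

lemma trivFun_eq {x : ℕ} (h1 : 1 ≤ x) (h2 : x ≤ 2*k) :
    trivFun k x = (if x % 2 = 1 then x + 1 else x - 1) := by
  unfold trivFun; rw [if_pos ⟨h1, h2⟩]

lemma triv_f_odd {x : ℕ} (h1 : 1 ≤ x) (h2 : x ≤ 2*k) (hx : x % 2 = 1) :
    (triv k).f x = x + 1 := by
  rw [triv_f, trivFun_eq h1 h2, if_pos hx]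

lemma triv_f_even {x : ℕ} (h1 : 1 ≤ x) (h2 : x ≤ 2*k) (hx : x % 2 = 0) :
    (triv k).f x = x - 1 := by
  rw [triv_f, trivFun_eq h1 h2, if_neg (by omega)]

lemma triv_f_pred (hk : 1 ≤ k) : (triv k).f (2*k - 1) = 2*k := by
  have := triv_f_odd (k := k) (x := 2*k-1) (by omega) (by omega) (by omega)
  omega

lemma triv_f_top (hk : 1 ≤ k) : (triv k).f (2*k) = 2*k - 1 :=
  triv_f_even (by omega) (by omega) (by omega)

lemma swapAct_f {i j : ℕ} (hi1 : 1 ≤ i) (hi2 : i ≤ 2*k) (hj1 : 1 ≤ j) (hj2 : j ≤ 2*k)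
    (m : PairPartition k) :
    (swapAct i j m).f = fun a => Equiv.swap i j (m.f (Equiv.swap i j a)) := by
  unfold swapAct
  rw [dif_pos ⟨hi1, hi2, hj1, hj2⟩]

lemma swapAct_swapAct {i j : ℕ} (hi1 : 1 ≤ i) (hi2 : i ≤ 2*k) (hj1 : 1 ≤ j) (hj2 : j ≤ 2*k)
    (m : PairPartition k) : swapAct i j (swapAct i j m) = m := by
  apply ext'
  rw [swapAct_f hi1 hi2 hj1 hj2, swapAct_f hi1 hi2 hj1 hj2]
  funext a
  simp

end PairPartition

namespace PairPartition

open Equiv MulAction Subgroup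

lemma mem_orbitSub_iff {H : Subgroup (Equiv.Perm ℕ)} {v x : ℕ} :
    x ∈ MulAction.orbit H v ↔ ∃ g ∈ H, g v = x := by
  rw [MulAction.mem_orbit_iff]
  constructor
  · rintro ⟨⟨g, hg⟩, h⟩; exact ⟨g, hg, h⟩
  · rintro ⟨g, hg, h⟩; exact ⟨⟨g, hg⟩, h⟩

lemma orbitSub_mapsTo {H : Subgroup (Equiv.Perm ℕ)} {v : ℕ} {g : Equiv.Perm ℕ} (hg : g ∈ H) :
    Set.MapsTo g (MulAction.orbit H v) (MulAction.orbit H v) := by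
  intro x hx
  rw [mem_orbitSub_iff] at hx ⊢
  obtain ⟨g', hg', rfl⟩ := hx
  exact ⟨g * g', H.mul_mem hg hg', rfl⟩

lemma closure_mapsTo {S : Set (Equiv.Perm ℕ)} {A : Set ℕ} (hA : A.Finite)
    (hmaps : ∀ σ ∈ S, Set.MapsTo σ A A) {g : Equiv.Perm ℕ}
    (hg : g ∈ Subgroup.closure S) : Set.MapsTo g A A := by
  have key : ∀ g ∈ Subgroup.closure S, Set.MapsTo (⇑g) A A ∧ Set.MapsTo (⇑g⁻¹) A A := by
    intro g hg
    induction hg using Subgroup.closure_induction with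
    | mem σ hσ =>
      have h1 : Set.MapsTo σ A A := hmaps σ hσ
      have h2 : Set.BijOn σ A A :=
        (hA.injOn_iff_bijOn_of_mapsTo h1).mp (σ.injective.injOn)
      refine ⟨h1, ?_⟩
      intro x hx
      obtain ⟨y, hy, hyx⟩ := h2.surjOn hx
      have : σ⁻¹ x = y := by rw [← hyx]; simp
      rwa [this]
    | one => exact ⟨fun x hx => by simpa using hx, fun x hx => by simpa using hx⟩
    | mul σ τ hσ hτ ihσ ihτ =>
      refine ⟨?_, ?_⟩
      · intro x hx
        have : (σ * τ) x = σ (τ x) := rfl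
        rw [this]; exact ihσ.1 (ihτ.1 hx)
      · intro x hx
        have : (σ * τ)⁻¹ x = τ⁻¹ (σ⁻¹ x) := by simp
        rw [this]; exact ihτ.2 (ihσ.2 hx)
    | inv σ hσ ihσ =>
      refine ⟨ihσ.2, by simpa using ihσ.1⟩
  exact (key g hg).1

lemma orbit_closure_subset {S : Set (Equiv.Perm ℕ)} {A : Set ℕ} (hA : A.Finite)
    (hmaps : ∀ σ ∈ S, Set.MapsTo σ A A) {v : ℕ} (hv : v ∈ A) :
    MulAction.orbit (Subgroup.closure S : Subgroup (Equiv.Perm ℕ)) v ⊆ A := by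
  intro x hx
  rw [mem_orbitSub_iff] at hx
  obtain ⟨g, hg, rfl⟩ := hx
  exact closure_mapsTo hA hmaps hg hv

/-- If two generating sets (given as indexed families) agree on a finite invariant
set `A` containing `v`, the corresponding closure-orbits of `v` coincide. -/
lemma orbit_closure_congr {ι : Type*} (gen gen' : ι → Equiv.Perm ℕ) {A : Set ℕ}
    (hA : A.Finite) (hmaps : ∀ i, Set.MapsTo (gen' i) A A)
    (hagree : ∀ i, Set.EqOn (gen i) (gen' i) A) {v : ℕ} (hv : v ∈ A) :
    MulAction.orbit (Subgroup.closure (Set.range gen) : Subgroup (Equiv.Perm ℕ)) v =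
      MulAction.orbit (Subgroup.closure (Set.range gen') : Subgroup (Equiv.Perm ℕ)) v := by
  have hmaps2 : ∀ i, Set.MapsTo (gen i) A A := by
    intro i x hx
    rw [hagree i hx]
    exact hmaps i hx
  have main : ∀ (f f' : ι → Equiv.Perm ℕ), (∀ i, Set.MapsTo (f i) A A) →
      (∀ i, Set.MapsTo (f' i) A A) → (∀ i, Set.EqOn (f i) (f' i) A) → ∀ w ∈ A,
      MulAction.orbit (Subgroup.closure (Set.range f) : Subgroup (Equiv.Perm ℕ)) w ⊆
      MulAction.orbit (Subgroup.closure (Set.range f') : Subgroup (Equiv.Perm ℕ)) w := by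
    intro f f' hf hf' hagr w hw
    set B := MulAction.orbit (Subgroup.closure (Set.range f') : Subgroup (Equiv.Perm ℕ)) w
      with hB
    have hBA : B ⊆ A := by
      apply orbit_closure_subset hA ?_ hw
      rintro σ ⟨i, rfl⟩
      exact hf' i
    have hBfin : B.Finite := hA.subset hBA
    have hBmaps : ∀ σ ∈ Set.range f, Set.MapsTo σ B B := by
      rintro σ ⟨i, rfl⟩ x hx
      have h1 : f i x = f' i x := hagr i (hBA hx)
      rw [h1]
      exact orbitSub_mapsTo (Subgroup.subset_closure (Set.mem_range_self i)) hx
    exact orbit_closure_subset hBfin hBmaps (MulAction.mem_orbit_self w)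
  apply Set.Subset.antisymm
  · exact main gen gen' hmaps2 hmaps hagree v hv
  · exact main gen' gen hmaps hmaps2 (fun i x hx => (hagree i hx).symm) v hv

end PairPartition

namespace PairPartition

open Equiv MulAction Subgroup

variable {k : ℕ}

/-- The "rotation" `g = 𝔪 ∘ 𝔢` of a pair partition. -/
def rot (m : PairPartition k) : Equiv.Perm ℕ := m.perm * (triv k).perm

/-- The `⟨g⟩`-orbit of a vertex. -/
def zOrb (m : PairPartition k) (v : ℕ) : Set ℕ :=
  MulAction.orbit (Subgroup.zpowers (rot m) : Subgroup (Equiv.Perm ℕ)) v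

lemma mem_zOrb_iff {m : PairPartition k} {v x : ℕ} :
    x ∈ zOrb m v ↔ ∃ n : ℤ, ((rot m) ^ n) v = x := by
  rw [zOrb, mem_orbitSub_iff]
  constructor
  · rintro ⟨g, hg, rfl⟩
    obtain ⟨n, rfl⟩ := Subgroup.mem_zpowers_iff.mp hg
    exact ⟨n, rfl⟩
  · rintro ⟨n, rfl⟩
    exact ⟨(rot m) ^ n, Subgroup.mem_zpowers_iff.mpr ⟨n, rfl⟩, rfl⟩

lemma charge_iff {m : PairPartition k} {v : ℕ} :
    charge m v ↔ v ∈ zOrb m (sSup (gammaOrbit m v)) := Iff.rfl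

/-- The ambient set `{1, …, 2k}` as a set of naturals. -/
def IccS (k : ℕ) : Set ℕ := {x : ℕ | 1 ≤ x ∧ x ≤ 2 * k}

lemma IccS_finite (k : ℕ) : (IccS k).Finite := by
  apply Set.Finite.subset (Set.finite_Icc 1 (2*k))
  intro x hx
  simpa [IccS, Set.mem_Icc] using hx

lemma perm_mapsTo (m : PairPartition k) : Set.MapsTo m.perm (IccS k) (IccS k) := by
  intro x hx
  exact (f_range m hx.1 hx.2 : _)

lemma perm_eqOn_apply {m m' : PairPartition k} {A : Set ℕ}
    (h : ∀ x ∈ A, m.f x = m'.f x) : Set.EqOn m.perm m'.perm A := fun x hx => h x hx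

lemma gammaOrbit_eq_orbit (m : PairPartition k) (v : ℕ) :
    gammaOrbit m v =
      MulAction.orbit (Subgroup.closure {(triv k).perm, m.perm} : Subgroup (Equiv.Perm ℕ)) v :=
  rfl

lemma gammaOrbit_subset_IccS (m : PairPartition k) {v : ℕ} (hv : v ∈ IccS k) :
    gammaOrbit m v ⊆ IccS k := by
  apply orbit_closure_subset (IccS_finite k) ?_ hv
  intro σ hσ
  rcases hσ with h | h
  · rw [h]; exact perm_mapsTo (triv k)
  · rw [Set.mem_singleton_iff] at h; rw [h]; exact perm_mapsTo m

lemma triv_perm_sq : ((triv k).perm) * ((triv k).perm) = 1 := perm_mul_self _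

lemma e_inv : ((triv k).perm)⁻¹ = (triv k).perm := by
  rw [inv_eq_iff_mul_eq_one]; exact triv_perm_sq

lemma p_inv (m : PairPartition k) : (m.perm)⁻¹ = m.perm := by
  rw [inv_eq_iff_mul_eq_one]; exact perm_mul_self m

lemma e_mul_rot_pow (m : PairPartition k) (n : ℤ) :
    (triv k).perm * (rot m) ^ n = (rot m) ^ (-n) * (triv k).perm := by
  have he : (triv k).perm * (triv k).perm = 1 := triv_perm_sq
  have h1 : (triv k).perm * (rot m) * (triv k).perm = (rot m)⁻¹ := by
    rw [rot, mul_inv_rev, e_inv, p_inv]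
    rw [mul_assoc (triv k).perm (m.perm * (triv k).perm) ((triv k).perm),
      mul_assoc m.perm ((triv k).perm) ((triv k).perm), he, mul_one]
  have h2 : (triv k).perm * (rot m) ^ n * (triv k).perm = ((rot m)⁻¹) ^ n := by
    have hc := conj_zpow (i := n) (a := (triv k).perm) (b := rot m)
    rw [e_inv] at hc
    rw [← hc, h1]
  calc (triv k).perm * (rot m) ^ n
      = ((triv k).perm * (rot m) ^ n * (triv k).perm) * (triv k).perm := by
        rw [mul_assoc, he, mul_one]
    _ = (rot m) ^ (-n) * (triv k).perm := by rw [h2, inv_zpow, ← zpow_neg]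

lemma mem_closure_pair (m : PairPartition k) (ρ : Equiv.Perm ℕ)
    (hρ : ρ ∈ (Subgroup.closure {(triv k).perm, m.perm} : Subgroup (Equiv.Perm ℕ))) :
    ∃ n : ℤ, ρ = (rot m) ^ n ∨ ρ = (rot m) ^ n * (triv k).perm := by
  induction hρ using Subgroup.closure_induction with
  | mem σ hσ =>
    rcases hσ with h | h
    · exact ⟨0, Or.inr (by rw [h]; group)⟩
    · rw [Set.mem_singleton_iff] at h
      refine ⟨1, Or.inr ?_⟩
      rw [h, zpow_one, rot, mul_assoc, triv_perm_sq, mul_one]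
  | one => exact ⟨0, Or.inl (by group)⟩
  | mul σ τ hσ hτ ihσ ihτ =>
    obtain ⟨n, hn⟩ := ihσ
    obtain ⟨m', hm⟩ := ihτ
    rcases hn with rfl | rfl <;> rcases hm with rfl | rfl
    · exact ⟨n + m', Or.inl (by group)⟩
    · exact ⟨n + m', Or.inr (by group)⟩
    · refine ⟨n - m', Or.inr ?_⟩
      calc (rot m) ^ n * (triv k).perm * (rot m) ^ m'
          = (rot m) ^ n * ((triv k).perm * (rot m) ^ m') := by rw [mul_assoc]
        _ = (rot m) ^ n * ((rot m) ^ (-m') * (triv k).perm) := by rw [e_mul_rot_pow]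
        _ = (rot m) ^ (n - m') * (triv k).perm := by group
    · refine ⟨n - m', Or.inl ?_⟩
      calc (rot m) ^ n * (triv k).perm * ((rot m) ^ m' * (triv k).perm)
          = (rot m) ^ n * (((triv k).perm * (rot m) ^ m') * (triv k).perm) := by
            rw [mul_assoc, mul_assoc]
        _ = (rot m) ^ n * (((rot m) ^ (-m') * (triv k).perm) * (triv k).perm) := by
            rw [e_mul_rot_pow]
        _ = (rot m) ^ n * ((rot m) ^ (-m') * ((triv k).perm * (triv k).perm)) := by
            rw [mul_assoc]
        _ = (rot m) ^ (n - m') := by rw [triv_perm_sq, mul_one]; group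
  | inv σ hσ ihσ =>
    obtain ⟨n, hn⟩ := ihσ
    rcases hn with rfl | rfl
    · exact ⟨-n, Or.inl (by group)⟩
    · refine ⟨n, Or.inr ?_⟩
      calc ((rot m) ^ n * (triv k).perm)⁻¹
          = (triv k).perm * (rot m) ^ (-n) := by rw [mul_inv_rev, e_inv]; group
        _ = (rot m) ^ n * (triv k).perm := by rw [e_mul_rot_pow]; group

lemma gammaOrbit_eq_union (m : PairPartition k) (v : ℕ) :
    gammaOrbit m v = zOrb m v ∪ zOrb m ((triv k).perm v) := by
  ext x
  constructor
  · intro hx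
    rw [gammaOrbit_eq_orbit, mem_orbitSub_iff] at hx
    obtain ⟨ρ, hρ, rfl⟩ := hx
    obtain ⟨n, hn | hn⟩ := mem_closure_pair m ρ hρ
    · left; rw [mem_zOrb_iff]; exact ⟨n, by rw [hn]⟩
    · right; rw [mem_zOrb_iff]
      refine ⟨n, ?_⟩
      rw [hn]; rfl
  · intro hx
    have hclos : ∀ n : ℤ, ((rot m) ^ n) ∈
        (Subgroup.closure {(triv k).perm, m.perm} : Subgroup (Equiv.Perm ℕ)) := by
      intro n
      apply Subgroup.zpow_mem
      rw [rot]
      exact Subgroup.mul_mem _ (Subgroup.subset_closure (by right; rfl))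
        (Subgroup.subset_closure (by left; rfl))
    rcases hx with hx | hx <;> rw [mem_zOrb_iff] at hx <;> obtain ⟨n, rfl⟩ := hx <;>
      rw [gammaOrbit_eq_orbit, mem_orbitSub_iff]
    · exact ⟨(rot m) ^ n, hclos n, rfl⟩
    · refine ⟨(rot m) ^ n * (triv k).perm, ?_, rfl⟩
      exact Subgroup.mul_mem _ (hclos n) (Subgroup.subset_closure (by left; rfl))

lemma zOrb_subset_gammaOrbit (m : PairPartition k) (v : ℕ) :
    zOrb m v ⊆ gammaOrbit m v := by
  rw [gammaOrbit_eq_union]; exact Set.subset_union_left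

lemma zOrb_eq_of_mem {m : PairPartition k} {v x : ℕ} (h : x ∈ zOrb m v) :
    zOrb m x = zOrb m v := MulAction.orbit_eq_iff.mpr h

lemma gammaOrbit_eq_of_mem {m : PairPartition k} {v x : ℕ} (h : x ∈ gammaOrbit m v) :
    gammaOrbit m x = gammaOrbit m v := MulAction.orbit_eq_iff.mpr h

/-- Key parity fact: on `{1,…,2k}`, a vertex and its `𝔢`-partner lie in different
`⟨g⟩`-orbits. -/
lemma e_not_mem_zOrb (m : PairPartition k) {v : ℕ} (hv : v ∈ IccS k) :
    (triv k).perm v ∉ zOrb m v := by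
  intro hmem
  rw [mem_zOrb_iff] at hmem
  obtain ⟨s, hs⟩ := hmem
  have hz : ∀ t : ℤ, ((rot m) ^ t) v ∈ IccS k := by
    intro t
    apply gammaOrbit_subset_IccS m hv
    apply zOrb_subset_gammaOrbit
    rw [mem_zOrb_iff]
    exact ⟨t, rfl⟩
  have key : ∀ t : ℤ, (triv k).perm (((rot m) ^ t) v) = ((rot m) ^ (s - t)) v := by
    intro t
    have h1 : (triv k).perm (((rot m) ^ t) v) = ((rot m) ^ (-t) * (triv k).perm) v := by
      rw [← e_mul_rot_pow]; rfl
    rw [h1]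
    have h2 : ((rot m) ^ (-t) * (triv k).perm) v = ((rot m) ^ (-t)) ((triv k).perm v) := rfl
    rw [h2, ← hs, ← Equiv.Perm.mul_apply, ← zpow_add]
    congr 1
    ring_nf
  rcases Int.even_or_odd s with ⟨t, ht⟩ | ⟨t, ht⟩
  · -- s = 2t : e fixes g^t v
    have hfix : (triv k).perm (((rot m) ^ t) v) = ((rot m) ^ t) v := by
      rw [key t]
      have hst : s - t = t := by omega
      rw [hst]
    have hmem := hz t
    exact (f_ne (triv k) hmem.1 hmem.2) hfix
  · -- s = 2t+1 : p fixes g^(t+1) v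
    have hfix : m.perm (((rot m) ^ (t+1)) v) = ((rot m) ^ (t+1)) v := by
      have h1 : m.perm (((rot m) ^ (t+1)) v) = (m.perm * (triv k).perm * (triv k).perm) (((rot m) ^ (t+1)) v) := by
        rw [mul_assoc, triv_perm_sq, mul_one]
      rw [h1]
      have h2 : (m.perm * (triv k).perm * (triv k).perm) (((rot m) ^ (t+1)) v)
          = (rot m) ((triv k).perm (((rot m) ^ (t+1)) v)) := rfl
      rw [h2, key (t+1)]
      have h3 : (rot m) (((rot m) ^ (s - (t+1))) v) = ((rot m) ^ (1 + (s - (t+1)))) v := by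
        rw [zpow_add, zpow_one]; rfl
      rw [h3]
      have hst : 1 + (s - (t+1)) = t + 1 := by omega
      rw [hst]
    have hmem := hz (t+1)
    exact (f_ne m hmem.1 hmem.2) hfix

lemma zOrb_disjoint (m : PairPartition k) {v : ℕ} (hv : v ∈ IccS k) :
    Disjoint (zOrb m v) (zOrb m ((triv k).perm v)) := by
  rw [Set.disjoint_left]
  intro x hx hx'
  have h1 : zOrb m x = zOrb m v := zOrb_eq_of_mem hx
  have h2 : zOrb m x = zOrb m ((triv k).perm v) := zOrb_eq_of_mem hx'
  have : (triv k).perm v ∈ zOrb m v := by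
    rw [← h1, h2]; exact MulAction.mem_orbit_self _
  exact e_not_mem_zOrb m hv this

lemma e_image_zOrb (m : PairPartition k) (v : ℕ) :
    (triv k).perm '' (zOrb m v) = zOrb m ((triv k).perm v) := by
  ext x
  constructor
  · rintro ⟨y, hy, rfl⟩
    rw [mem_zOrb_iff] at hy ⊢
    obtain ⟨n, rfl⟩ := hy
    refine ⟨-n, ?_⟩
    have := e_mul_rot_pow m n
    calc ((rot m) ^ (-n)) ((triv k).perm v) = ((rot m) ^ (-n) * (triv k).perm) v := rfl
    _ = ((triv k).perm * (rot m) ^ n) v := by rw [this]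
    _ = (triv k).perm (((rot m) ^ n) v) := rfl
  · intro hx
    rw [mem_zOrb_iff] at hx
    obtain ⟨n, rfl⟩ := hx
    refine ⟨((rot m) ^ (-n)) v, mem_zOrb_iff.mpr ⟨-n, rfl⟩, ?_⟩
    calc (triv k).perm (((rot m) ^ (-n)) v) = ((triv k).perm * (rot m) ^ (-n)) v := rfl
    _ = ((rot m) ^ n * (triv k).perm) v := by rw [e_mul_rot_pow]; norm_num
    _ = ((rot m) ^ n) ((triv k).perm v) := rfl

lemma zOrb_finite (m : PairPartition k) {v : ℕ} (hv : v ∈ IccS k) : (zOrb m v).Finite :=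
  (IccS_finite k).subset ((zOrb_subset_gammaOrbit m v).trans (gammaOrbit_subset_IccS m hv))

lemma gammaOrbit_ncard_eq (m : PairPartition k) {v : ℕ} (hv : v ∈ IccS k) :
    (gammaOrbit m v).ncard = 2 * (zOrb m v).ncard := by
  rw [gammaOrbit_eq_union]
  have hev : (triv k).perm v ∈ IccS k := perm_mapsTo (triv k) hv
  rw [Set.ncard_union_eq (zOrb_disjoint m hv) (zOrb_finite m hv) (zOrb_finite m hev)]
  rw [← e_image_zOrb, Set.ncard_image_of_injective _ (Equiv.injective _)]
  ring

lemma gammaOrbit_ncard_even (m : PairPartition k) {v : ℕ} (hv : v ∈ IccS k) :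
    Even (gammaOrbit m v).ncard := by
  rw [gammaOrbit_ncard_eq m hv]; exact even_two_mul _

end PairPartition

namespace PairPartition

open Equiv MulAction Subgroup

variable {k : ℕ}

lemma mem_gammaOrbit_self (m : PairPartition k) (v : ℕ) : v ∈ gammaOrbit m v :=
  MulAction.mem_orbit_self v

lemma f_mem_gammaOrbit (m : PairPartition k) (v : ℕ) : m.f v ∈ gammaOrbit m v := by
  rw [gammaOrbit_eq_orbit, mem_orbitSub_iff]
  exact ⟨m.perm, Subgroup.subset_closure (by right; rfl), rfl⟩

lemma e_mem_gammaOrbit (m : PairPartition k) (v : ℕ) : (triv k).f v ∈ gammaOrbit m v := by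
  rw [gammaOrbit_eq_orbit, mem_orbitSub_iff]
  exact ⟨(triv k).perm, Subgroup.subset_closure (by left; rfl), rfl⟩

lemma sSup_gammaOrbit_eq (m : PairPartition k) {v : ℕ} (hv : v ∈ IccS k)
    (h2k : 2 * k ∈ gammaOrbit m v) : sSup (gammaOrbit m v) = 2 * k := by
  apply le_antisymm
  · apply csSup_le ⟨v, mem_gammaOrbit_self m v⟩
    intro x hx
    exact (gammaOrbit_subset_IccS m hv hx).2
  · apply le_csSup _ h2k
    exact ⟨2 * k, fun x hx => (gammaOrbit_subset_IccS m hv hx).2⟩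

/-- Congruence for `zpowers`-orbits. -/
lemma zOrb_congr {g g' : Equiv.Perm ℕ} {A : Set ℕ} (hA : A.Finite)
    (hmaps : Set.MapsTo g' A A) (hagree : Set.EqOn g g' A) {v : ℕ} (hv : v ∈ A) :
    MulAction.orbit (Subgroup.zpowers g : Subgroup (Equiv.Perm ℕ)) v =
      MulAction.orbit (Subgroup.zpowers g' : Subgroup (Equiv.Perm ℕ)) v := by
  have h1 : Set.range (fun _ : Unit => g) = {g} := Set.range_const
  have h2 : Set.range (fun _ : Unit => g') = {g'} := Set.range_const
  rw [Subgroup.zpowers_eq_closure, Subgroup.zpowers_eq_closure, ← h1, ← h2]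
  exact orbit_closure_congr (fun _ : Unit => g) (fun _ : Unit => g') hA
    (fun _ => hmaps) (fun _ => hagree) hv

/-- Congruence for pair-closure orbits. -/
lemma orbit_closure_congr_pair {σ τ σ' τ' : Equiv.Perm ℕ} {A : Set ℕ} (hA : A.Finite)
    (hmapsσ : Set.MapsTo σ' A A) (hmapsτ : Set.MapsTo τ' A A)
    (hagreeσ : Set.EqOn σ σ' A) (hagreeτ : Set.EqOn τ τ' A) {v : ℕ} (hv : v ∈ A) :
    MulAction.orbit (Subgroup.closure {σ, τ} : Subgroup (Equiv.Perm ℕ)) v =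
      MulAction.orbit (Subgroup.closure {σ', τ'} : Subgroup (Equiv.Perm ℕ)) v := by
  have h1 : ∀ a b : Equiv.Perm ℕ, Set.range (fun x : Bool => if x then a else b) = {a, b} := by
    intro a b
    ext x
    constructor
    · rintro ⟨c, rfl⟩
      cases c
      · right; rfl
      · left; rfl
    · rintro (rfl | rfl)
      · exact ⟨true, rfl⟩
      · exact ⟨false, rfl⟩
  rw [← h1 σ τ, ← h1 σ' τ']
  apply orbit_closure_congr _ _ hA _ _ hv
  · intro i
    cases i
    · exact hmapsτ
    · exact hmapsσ
  · intro i
    cases i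
    · exact hagreeτ
    · exact hagreeσ

lemma rot_apply (m : PairPartition k) (x : ℕ) : rot m x = m.f ((triv k).f x) := rfl

/-- The crucial sign computation: the weight of the unique contributing transposition
is `1`. -/
lemma omegab_eq_one {R : Type*} [CommRing R] (b : R) (m : PairPartition k) (hk : 1 ≤ k)
    {a : ℕ} (ha1 : 1 ≤ a) (ha2 : a ≤ 2*k - 2) (hfa : m.f a = 2*k) :
    omegab b m a (2*k - 1) = 1 := by
  have haI : a ∈ IccS k := ⟨ha1, by omega⟩
  have hbI : 2*k - 1 ∈ IccS k := ⟨by omega, by omega⟩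
  have htopI : 2*k ∈ IccS k := ⟨by omega, le_refl _⟩
  have h2ka : 2*k ∈ gammaOrbit m a := by
    have := f_mem_gammaOrbit m a
    rwa [hfa] at this
  have h2kb : 2*k ∈ gammaOrbit m (2*k - 1) := by
    have := e_mem_gammaOrbit m (2*k - 1)
    rwa [triv_f_pred hk] at this
  have hsupa : sSup (gammaOrbit m a) = 2*k := sSup_gammaOrbit_eq m haI h2ka
  have hsupb : sSup (gammaOrbit m (2*k-1)) = 2*k := sSup_gammaOrbit_eq m hbI h2kb
  -- 2k-1 ∉ zOrb m (2k)
  have hb_not : (2*k - 1) ∉ zOrb m (2*k) := by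
    have h1 : (triv k).perm (2*k) = 2*k - 1 := triv_f_top hk
    have := e_not_mem_zOrb m htopI
    rwa [h1] at this
  have ha_not : a ∉ zOrb m (2*k) := by
    intro hmem
    apply hb_not
    have hrot : rot m (2*k - 1) = a := by
      rw [rot_apply, triv_f_pred hk, ← hfa, m.invol]
    have ha_mem : a ∈ zOrb m (2*k - 1) := by
      rw [mem_zOrb_iff]
      exact ⟨1, by rw [zpow_one]; exact hrot⟩
    have h2 : zOrb m a = zOrb m (2*k - 1) := zOrb_eq_of_mem ha_mem
    have h3 : zOrb m a = zOrb m (2*k) := zOrb_eq_of_mem hmem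
    rw [← h3, h2]
    exact MulAction.mem_orbit_self _
  have hca : ¬ charge m a := by
    rw [charge_iff, hsupa]
    exact ha_not
  have hcb : ¬ charge m (2*k - 1) := by
    rw [charge_iff, hsupb]
    exact hb_not
  rw [omegab, if_pos (iff_of_false hca hcb)]

end PairPartition

namespace PairPartition

open Equiv MulAction Subgroup

variable {k : ℕ}

lemma mem_IccS_iff {x : ℕ} : x ∈ IccS k ↔ x ∈ Finset.Icc 1 (2*k) := by
  simp [IccS, Finset.mem_Icc]

lemma down_f {m : PairPartition (k+1)} (h : m.f (2*(k+1)-1) = 2*(k+1)) :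
    (down m).f = fun a => if a = 2*(k+1)-1 ∨ a = 2*(k+1) then a else m.f a := by
  unfold down; rw [dif_pos h]

lemma down_f_apply {m : PairPartition (k+1)} (h : m.f (2*(k+1)-1) = 2*(k+1)) {x : ℕ}
    (hx : x ≤ 2*k) : (down m).f x = m.f x := by
  rw [down_f h]
  simp only []
  rw [if_neg (by omega)]

lemma f_top {m : PairPartition (k+1)} (h : m.f (2*(k+1)-1) = 2*(k+1)) :
    m.f (2*(k+1)) = 2*(k+1)-1 := by
  conv_lhs => rw [← h, m.invol]

lemma triv_f_agree {x : ℕ} (hx : x ≤ 2*k) : (triv (k+1)).f x = (triv k).f x := by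
  rcases Nat.eq_zero_or_pos x with rfl | hx1
  · rw [triv_f, triv_f]; unfold trivFun; simp
  · rw [triv_f, triv_f, trivFun_eq hx1 (by omega), trivFun_eq hx1 hx]

lemma gammaOrbit_pair {m : PairPartition (k+1)} (hpair : m.f (2*(k+1)-1) = 2*(k+1)) :
    gammaOrbit m (2*(k+1)-1) = {2*(k+1)-1, 2*(k+1)} := by
  have he1 : (triv (k+1)).f (2*(k+1)-1) = 2*(k+1) := triv_f_pred (by omega)
  have he2 : (triv (k+1)).f (2*(k+1)) = 2*(k+1)-1 := triv_f_top (by omega)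
  have hm2 : m.f (2*(k+1)) = 2*(k+1)-1 := f_top hpair
  apply Set.Subset.antisymm
  · apply orbit_closure_subset ((Set.finite_singleton _).insert _) ?_ (by left; rfl)
    intro σ hσ x hx
    rcases hσ with h | h
    · subst h
      rcases hx with rfl | hx
      · rw [Set.mem_insert_iff]; right
        show (triv (k+1)).f _ ∈ _
        rw [he1]; rfl
      · rw [Set.mem_singleton_iff] at hx; subst hx
        left
        show (triv (k+1)).f _ = _
        rw [he2]
    · rw [Set.mem_singleton_iff] at h; subst h
      rcases hx with rfl | hx
      · right
        show m.f _ ∈ _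
        rw [hpair]; rfl
      · rw [Set.mem_singleton_iff] at hx; subst hx
        left
        show m.f _ = _
        rw [hm2]
  · intro x hx
    rcases hx with rfl | hx
    · exact mem_gammaOrbit_self m _
    · rw [Set.mem_singleton_iff] at hx; subst hx
      have := e_mem_gammaOrbit m (2*(k+1)-1)
      rwa [he1] at this

lemma gammaOrbit_down {m : PairPartition (k+1)} (hpair : m.f (2*(k+1)-1) = 2*(k+1))
    {x : ℕ} (hx : x ∈ IccS k) :
    gammaOrbit m x = gammaOrbit (down m) x := by
  rw [gammaOrbit_eq_orbit, gammaOrbit_eq_orbit]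
  apply orbit_closure_congr_pair (IccS_finite k) (perm_mapsTo (triv k))
    (perm_mapsTo (down m)) ?_ ?_ hx
  · intro y hy
    exact triv_f_agree hy.2
  · intro y hy
    show m.f y = (down m).f y
    rw [down_f_apply hpair hy.2]

end PairPartition

namespace PairPartition

open Equiv MulAction Subgroup

variable {k : ℕ}

lemma Icc_split (k : ℕ) :
    Finset.Icc 1 (2*(k+1)) = Finset.Icc 1 (2*k) ∪ {2*(k+1)-1, 2*(k+1)} := by
  ext x
  simp only [Finset.mem_Icc, Finset.mem_union, Finset.mem_insert, Finset.mem_singleton]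
  omega

lemma Icc_pair_disj (k : ℕ) :
    Disjoint (Finset.Icc 1 (2*k)) ({2*(k+1)-1, 2*(k+1)} : Finset ℕ) := by
  rw [Finset.disjoint_left]
  intro x hx hx'
  simp only [Finset.mem_Icc] at hx
  simp only [Finset.mem_insert, Finset.mem_singleton] at hx'
  omega

lemma ncard_pair' (k : ℕ) : ({2*(k+1)-1, 2*(k+1)} : Set ℕ).ncard = 2 :=
  Set.ncard_pair (by omega)

lemma gammaOrbit_top_pair {m : PairPartition (k+1)} (hpair : m.f (2*(k+1)-1) = 2*(k+1)) :
    gammaOrbit m (2*(k+1)) = {2*(k+1)-1, 2*(k+1)} := by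
  have h1 : 2*(k+1) ∈ gammaOrbit m (2*(k+1)-1) := by
    rw [gammaOrbit_pair hpair]; right; rfl
  rw [gammaOrbit_eq_of_mem h1, gammaOrbit_pair hpair]

lemma cycleCount_down {m : PairPartition (k+1)} (hpair : m.f (2*(k+1)-1) = 2*(k+1)) (ℓ : ℕ) :
    cycleCount m ℓ = cycleCount (down m) ℓ + (if ℓ = 1 then 1 else 0) := by
  show (((Finset.Icc 1 (2 * (k+1))).filter
      fun a => (gammaOrbit m a).ncard = 2 * ℓ).card) / (2 * ℓ) = _
  rw [Icc_split k, Finset.filter_union,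
    Finset.card_union_of_disjoint (Finset.disjoint_filter_filter (Icc_pair_disj k))]
  have h1 : (Finset.Icc 1 (2*k)).filter (fun a => (gammaOrbit m a).ncard = 2 * ℓ)
      = (Finset.Icc 1 (2*k)).filter (fun a => (gammaOrbit (down m) a).ncard = 2 * ℓ) := by
    apply Finset.filter_congr
    intro x hx
    rw [gammaOrbit_down hpair (mem_IccS_iff.mpr hx)]
  rw [h1]
  have hP : ∀ x ∈ ({2*(k+1)-1, 2*(k+1)} : Finset ℕ), (gammaOrbit m x).ncard = 2 := by
    intro x hx
    rcases Finset.mem_insert.mp hx with rfl | hx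
    · rw [gammaOrbit_pair hpair]; exact ncard_pair' k
    · rw [Finset.mem_singleton] at hx; subst hx
      rw [gammaOrbit_top_pair hpair]; exact ncard_pair' k
  by_cases hℓ : ℓ = 1
  · subst hℓ
    have h2 : ({2*(k+1)-1, 2*(k+1)} : Finset ℕ).filter
        (fun a => (gammaOrbit m a).ncard = 2 * 1) = {2*(k+1)-1, 2*(k+1)} := by
      apply Finset.filter_true_of_mem
      intro x hx
      rw [hP x hx]
    rw [h2, if_pos rfl]
    have h3 : ({2*(k+1)-1, 2*(k+1)} : Finset ℕ).card = 2 := by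
      rw [Finset.card_insert_of_notMem (by simp; omega), Finset.card_singleton]
    rw [h3]
    rw [Nat.add_div_right _ (by norm_num)]
    rfl
  · have h2 : ({2*(k+1)-1, 2*(k+1)} : Finset ℕ).filter
        (fun a => (gammaOrbit m a).ncard = 2 * ℓ) = ∅ := by
      apply Finset.filter_false_of_mem
      intro x hx hc
      rw [hP x hx] at hc
      omega
    rw [h2, if_neg hℓ]
    simp only [Finset.card_empty, Nat.add_zero]
    rfl

end PairPartition

namespace PairPartition

open Equiv MulAction Subgroup

variable {k : ℕ}

/-- The reduced pair partition `((a 2k-1)·𝔪)↓` for `a = 𝔪(2k)`. -/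
noncomputable def mergeDown (m : PairPartition (k+1)) : PairPartition k :=
  down (swapAct (m.f (2*(k+1))) (2*(k+1)-1) m)

section Merge
set_option linter.unusedSectionVars false

variable {m : PairPartition (k+1)} (hA : m.f (2*(k+1)) ≤ 2*k)

lemma fA_pos : 1 ≤ m.f (2*(k+1)) := (f_range m (a := 2*(k+1)) (by omega) (by omega)).1

lemma fA_invol : m.f (m.f (2*(k+1))) = 2*(k+1) := m.invol _

lemma swapA_f (x : ℕ) :
    (swapAct (m.f (2*(k+1))) (2*(k+1)-1) m).f x =
      Equiv.swap (m.f (2*(k+1))) (2*(k+1)-1) (m.f (Equiv.swap (m.f (2*(k+1))) (2*(k+1)-1) x)) := by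
  rw [swapAct_f (fA_pos) ((f_range m (a := 2*(k+1)) (by omega) (by omega)).2) (by omega) (by omega)]

include hA

lemma fC_facts : 1 ≤ m.f (2*(k+1)-1) ∧ m.f (2*(k+1)-1) ≤ 2*k ∧
    m.f (2*(k+1)-1) ≠ m.f (2*(k+1)) := by
  have h1 := f_range m (a := 2*(k+1)-1) (by omega) (by omega)
  have h2 : m.f (2*(k+1)-1) ≠ 2*(k+1)-1 := f_ne m (by omega) (by omega)
  have h3 : m.f (2*(k+1)-1) ≠ 2*(k+1) := by
    intro hc
    have : m.f (m.f (2*(k+1)-1)) = m.f (2*(k+1)) := by rw [hc]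
    rw [m.invol] at this
    omega
  have h4 : m.f (2*(k+1)-1) ≠ m.f (2*(k+1)) := by
    intro hc
    have := f_inj m hc
    omega
  refine ⟨h1.1, by omega, h4⟩


lemma swapA_pair : (swapAct (m.f (2*(k+1))) (2*(k+1)-1) m).f (2*(k+1)-1) = 2*(k+1) := by
  rw [swapA_f, Equiv.swap_apply_right, fA_invol,
    Equiv.swap_apply_of_ne_of_ne (by omega) (by omega)]

lemma mergeDown_f_other {x : ℕ} (hx : x ≤ 2*k) (hxa : x ≠ m.f (2*(k+1)))
    (hxc : x ≠ m.f (2*(k+1)-1)) : (mergeDown m).f x = m.f x := by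
  rw [mergeDown, down_f_apply (swapA_pair hA) hx, swapA_f]
  have hfx1 : m.f x ≠ m.f (2*(k+1)) := fun hc => by have := f_inj m hc; omega
  have hfx2 : m.f x ≠ 2*(k+1)-1 := by
    intro hc
    have : m.f (m.f x) = m.f (2*(k+1)-1) := by rw [hc]
    rw [m.invol] at this
    exact hxc this
  rw [Equiv.swap_apply_of_ne_of_ne hxa (by omega),
    Equiv.swap_apply_of_ne_of_ne hfx1 hfx2]

lemma mergeDown_f_a : (mergeDown m).f (m.f (2*(k+1))) = m.f (2*(k+1)-1) := by
  rw [mergeDown, down_f_apply (swapA_pair hA) hA, swapA_f, Equiv.swap_apply_left]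
  have h := fC_facts hA
  rw [Equiv.swap_apply_of_ne_of_ne h.2.2 (by omega)]

lemma mergeDown_f_c : (mergeDown m).f (m.f (2*(k+1)-1)) = m.f (2*(k+1)) := by
  have h := fC_facts hA
  rw [mergeDown, down_f_apply (swapA_pair hA) h.2.1, swapA_f,
    Equiv.swap_apply_of_ne_of_ne h.2.2 (by omega)]
  have : m.f (m.f (2*(k+1)-1)) = 2*(k+1)-1 := m.invol _
  rw [this, Equiv.swap_apply_right]

/-- The orbit of `a` in the reduced pair partition. -/
def mergeO (m : PairPartition (k+1)) : Set ℕ := gammaOrbit (mergeDown m) (m.f (2*(k+1)))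

lemma mergeO_subset : mergeO m ⊆ IccS k :=
  gammaOrbit_subset_IccS _ ⟨fA_pos, hA⟩

lemma mergeO_finite : (mergeO m).Finite := (IccS_finite k).subset (mergeO_subset hA)

omit hA in
lemma a_mem_mergeO : m.f (2*(k+1)) ∈ mergeO m := mem_gammaOrbit_self _ _

lemma c_mem_mergeO : m.f (2*(k+1)-1) ∈ mergeO m := by
  have := f_mem_gammaOrbit (mergeDown m) (m.f (2*(k+1)))
  rwa [mergeDown_f_a hA] at this

omit hA in
lemma e_k_mapsTo_mergeO : Set.MapsTo ((triv k).perm) (mergeO m) (mergeO m) :=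
  orbitSub_mapsTo (Subgroup.subset_closure (by left; rfl))

omit hA in
lemma md_mapsTo_mergeO : Set.MapsTo ((mergeDown m).perm) (mergeO m) (mergeO m) :=
  orbitSub_mapsTo (Subgroup.subset_closure (by right; rfl))

/-- Main merge lemma, part 1: the big cycle of `𝔪`. -/
lemma gammaOrbit_merge_top :
    gammaOrbit m (2*(k+1)) = mergeO m ∪ {2*(k+1)-1, 2*(k+1)} := by
  have hC := fC_facts hA
  have he1 : (triv (k+1)).f (2*(k+1)-1) = 2*(k+1) := triv_f_pred (by omega)
  have he2 : (triv (k+1)).f (2*(k+1)) = 2*(k+1)-1 := triv_f_top (by omega)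
  have hBfin : (mergeO m ∪ {2*(k+1)-1, 2*(k+1)} : Set ℕ).Finite :=
    (mergeO_finite hA).union ((Set.finite_singleton _).insert _)
  apply Set.Subset.antisymm
  · apply orbit_closure_subset hBfin ?_ (by right; right; rfl)
    intro σ hσ x hx
    rcases hσ with h | h
    · subst h
      rcases hx with hx | hx
      · left
        have hxI := mergeO_subset hA hx
        have : (triv (k+1)).perm x = (triv k).perm x := triv_f_agree hxI.2
        rw [this]
        exact e_k_mapsTo_mergeO hx
      · rcases hx with rfl | hx
        · right; right
          show (triv (k+1)).f _ ∈ _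
          rw [he1]; rfl
        · rw [Set.mem_singleton_iff] at hx; subst hx
          right; left
          show (triv (k+1)).f _ = _
          exact he2
    · rw [Set.mem_singleton_iff] at h; subst h
      rcases hx with hx | hx
      · by_cases hxa : x = m.f (2*(k+1))
        · subst hxa
          right; right
          show m.f _ ∈ _
          rw [fA_invol]; rfl
        · by_cases hxc : x = m.f (2*(k+1)-1)
          · subst hxc
            right; left
            show m.f _ = _
            exact m.invol _
          · left
            have hxI := mergeO_subset hA hx
            have : m.perm x = (mergeDown m).f x :=
              (mergeDown_f_other hA hxI.2 hxa hxc).symm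
            rw [this]
            exact md_mapsTo_mergeO hx
      · rcases hx with rfl | hx
        · left
          show m.f _ ∈ _
          exact c_mem_mergeO hA
        · rw [Set.mem_singleton_iff] at hx; subst hx
          left
          show m.f _ ∈ _
          exact a_mem_mergeO
  · intro x hx
    have htop : 2*(k+1) ∈ gammaOrbit m (2*(k+1)) := mem_gammaOrbit_self _ _
    have hpred : 2*(k+1)-1 ∈ gammaOrbit m (2*(k+1)) := by
      have := e_mem_gammaOrbit m (2*(k+1))
      rwa [he2] at this
    have ha : m.f (2*(k+1)) ∈ gammaOrbit m (2*(k+1)) := f_mem_gammaOrbit m _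
    have hc : m.f (2*(k+1)-1) ∈ gammaOrbit m (2*(k+1)) := by
      have h2 : m.perm (2*(k+1)-1) ∈ gammaOrbit m (2*(k+1)) :=
        orbitSub_mapsTo (Subgroup.subset_closure (by right; rfl)) hpred
      exact h2
    rcases hx with hx | hx
    · -- x ∈ mergeO m : use the intersection trick
      have key : gammaOrbit (mergeDown m) (m.f (2*(k+1))) ⊆
          gammaOrbit m (2*(k+1)) ∩ mergeO m := by
        apply orbit_closure_subset (Set.Finite.inter_of_right (mergeO_finite hA) _) ?_
          ⟨ha, a_mem_mergeO⟩
        intro σ hσ y hy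
        obtain ⟨hy1, hy2⟩ := hy
        have hyI := mergeO_subset hA hy2
        rcases hσ with h | h
        · subst h
          constructor
          · have : (triv k).perm y = (triv (k+1)).perm y := (triv_f_agree hyI.2).symm
            rw [this]
            exact orbitSub_mapsTo (Subgroup.subset_closure (by left; rfl)) hy1
          · exact e_k_mapsTo_mergeO hy2
        · rw [Set.mem_singleton_iff] at h; subst h
          refine ⟨?_, md_mapsTo_mergeO hy2⟩
          by_cases hya : y = m.f (2*(k+1))
          · subst hya
            show (mergeDown m).f _ ∈ _
            rw [mergeDown_f_a hA]
            exact hc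
          · by_cases hyc : y = m.f (2*(k+1)-1)
            · subst hyc
              show (mergeDown m).f _ ∈ _
              rw [mergeDown_f_c hA]
              exact ha
            · show (mergeDown m).f y ∈ _
              rw [mergeDown_f_other hA hyI.2 hya hyc]
              exact orbitSub_mapsTo (Subgroup.subset_closure (by right; rfl)) hy1
      exact (key hx).1
    · rcases hx with rfl | hx
      · exact hpred
      · rw [Set.mem_singleton_iff] at hx; subst hx
        exact htop

/-- Main merge lemma, part 2: away from the merged cycle, orbits agree. -/
lemma gammaOrbit_merge_away {x : ℕ} (hx : x ∈ IccS k) (hxO : x ∉ mergeO m) :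
    gammaOrbit m x = gammaOrbit (mergeDown m) x := by
  have hC := fC_facts hA
  rw [gammaOrbit_eq_orbit, gammaOrbit_eq_orbit]
  apply orbit_closure_congr_pair ((IccS_finite k).diff) ?_ ?_ ?_ ?_
    (⟨hx, hxO⟩ : x ∈ IccS k \ mergeO m)
  · intro y hy
    refine ⟨perm_mapsTo (triv k) hy.1, ?_⟩
    intro hc
    have : y ∈ mergeO m := by
      have h2 : (triv k).perm ((triv k).perm y) = y := (triv k).invol y
      have := e_k_mapsTo_mergeO hc
      rwa [h2] at this
    exact hy.2 this
  · intro y hy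
    refine ⟨perm_mapsTo (mergeDown m) hy.1, ?_⟩
    intro hc
    have h2 : (mergeDown m).perm ((mergeDown m).perm y) = y := (mergeDown m).invol y
    have := md_mapsTo_mergeO hc
    rw [h2] at this
    exact hy.2 this
  · intro y hy
    exact triv_f_agree hy.1.2
  · intro y hy
    have hya : y ≠ m.f (2*(k+1)) := fun hc => hy.2 (hc ▸ a_mem_mergeO)
    have hyc : y ≠ m.f (2*(k+1)-1) := fun hc => hy.2 (hc ▸ c_mem_mergeO hA)
    exact (mergeDown_f_other hA hy.1.2 hya hyc).symm

end Merge

end PairPartition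

namespace PairPartition

open Equiv MulAction Subgroup

variable {k : ℕ}

section MergeCount
set_option linter.unusedSectionVars false

variable {m : PairPartition (k+1)} (hA : m.f (2*(k+1)) ≤ 2*k) {ℓ0 : ℕ}

include hA

lemma mergeO_pair_disjoint :
    Disjoint (mergeO m) ({2*(k+1)-1, 2*(k+1)} : Set ℕ) := by
  rw [Set.disjoint_left]
  intro x hx hx'
  obtain ⟨hx1, hx2⟩ : 1 ≤ x ∧ x ≤ 2*k := mergeO_subset hA hx
  rcases hx' with rfl | hx'
  · omega
  · rw [Set.mem_singleton_iff] at hx'; omega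

lemma merge_ncard_top (hd : (mergeO m).ncard = 2*ℓ0) :
    (gammaOrbit m (2*(k+1))).ncard = 2*ℓ0 + 2 := by
  rw [gammaOrbit_merge_top hA,
    Set.ncard_union_eq (mergeO_pair_disjoint hA) (mergeO_finite hA)
      ((Set.finite_singleton _).insert _), hd, ncard_pair' k]

lemma merge_ncard_of_memO (hd : (mergeO m).ncard = 2*ℓ0) {x : ℕ} (hx : x ∈ mergeO m) :
    (gammaOrbit m x).ncard = 2*ℓ0 + 2 := by
  have hxB : x ∈ gammaOrbit m (2*(k+1)) := by
    rw [gammaOrbit_merge_top hA]; left; exact hx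
  rw [gammaOrbit_eq_of_mem hxB, merge_ncard_top hA hd]

lemma merge_ncard_of_pair (hd : (mergeO m).ncard = 2*ℓ0) {x : ℕ}
    (hx : x = 2*(k+1)-1 ∨ x = 2*(k+1)) : (gammaOrbit m x).ncard = 2*ℓ0 + 2 := by
  have hxB : x ∈ gammaOrbit m (2*(k+1)) := by
    rw [gammaOrbit_merge_top hA]; right
    rcases hx with rfl | rfl
    · left; rfl
    · right; rfl
  rw [gammaOrbit_eq_of_mem hxB, merge_ncard_top hA hd]

lemma merge_ncard_down_of_memO (hd : (mergeO m).ncard = 2*ℓ0) {x : ℕ} (hx : x ∈ mergeO m) :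
    (gammaOrbit (mergeDown m) x).ncard = 2*ℓ0 := by
  have : gammaOrbit (mergeDown m) x = mergeO m := gammaOrbit_eq_of_mem hx
  rw [this, hd]

lemma ℓ0_pos (hd : (mergeO m).ncard = 2*ℓ0) : 1 ≤ ℓ0 := by
  have hsub : ({m.f (2*(k+1)), m.f (2*(k+1)-1)} : Set ℕ) ⊆ mergeO m := by
    intro x hx
    rcases hx with rfl | hx
    · exact a_mem_mergeO
    · rw [Set.mem_singleton_iff] at hx; subst hx
      exact c_mem_mergeO hA
  have h2 : ({m.f (2*(k+1)), m.f (2*(k+1)-1)} : Set ℕ).ncard = 2 :=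
    Set.ncard_pair (Ne.symm (fC_facts hA).2.2)
  have := Set.ncard_le_ncard hsub (mergeO_finite hA)
  omega

lemma card_filter_merge (hd : (mergeO m).ncard = 2*ℓ0) (ℓ : ℕ) :
    ((Finset.Icc 1 (2*(k+1))).filter fun x => (gammaOrbit m x).ncard = 2*ℓ).card
      + (if ℓ = ℓ0 then 2*ℓ0 else 0)
    = ((Finset.Icc 1 (2*k)).filter fun x => (gammaOrbit (mergeDown m) x).ncard = 2*ℓ).card
      + (if ℓ = ℓ0 + 1 then 2*ℓ0+2 else 0) := by
  classical
  set Ofin := (mergeO_finite hA).toFinset with hOfin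
  have hmemO : ∀ x, x ∈ Ofin ↔ x ∈ mergeO m := fun x => Set.Finite.mem_toFinset _
  have hOsub : Ofin ⊆ Finset.Icc 1 (2*k) := by
    intro x hx
    rw [hmemO] at hx
    exact mem_IccS_iff.mp (mergeO_subset hA hx)
  have hcardO : Ofin.card = 2*ℓ0 := by
    rw [← hd]
    exact (Set.ncard_eq_toFinset_card _ (mergeO_finite hA)).symm
  -- split the big interval
  rw [Icc_split k, Finset.filter_union,
    Finset.card_union_of_disjoint (Finset.disjoint_filter_filter (Icc_pair_disj k))]
  -- pair part
  have hpair_card : (({2*(k+1)-1, 2*(k+1)} : Finset ℕ).filter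
      fun x => (gammaOrbit m x).ncard = 2*ℓ).card = if ℓ = ℓ0 + 1 then 2 else 0 := by
    by_cases hℓ : ℓ = ℓ0 + 1
    · subst hℓ
      rw [if_pos rfl, Finset.filter_true_of_mem, Finset.card_insert_of_notMem (by simp; omega),
        Finset.card_singleton]
      intro x hx
      rcases Finset.mem_insert.mp hx with rfl | hx
      · rw [merge_ncard_of_pair hA hd (Or.inl rfl)]; ring
      · rw [Finset.mem_singleton] at hx; subst hx
        rw [merge_ncard_of_pair hA hd (Or.inr rfl)]; ring
    · rw [if_neg hℓ, Finset.filter_false_of_mem, Finset.card_empty]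
      intro x hx hc
      rcases Finset.mem_insert.mp hx with rfl | hx
      · rw [merge_ncard_of_pair hA hd (Or.inl rfl)] at hc; omega
      · rw [Finset.mem_singleton] at hx; subst hx
        rw [merge_ncard_of_pair hA hd (Or.inr rfl)] at hc; omega
  rw [hpair_card]
  -- Icc part for m : split off Ofin
  have hsplit : Finset.Icc 1 (2*k) = Ofin ∪ (Finset.Icc 1 (2*k) \ Ofin) :=
    (Finset.union_sdiff_of_subset hOsub).symm
  have hdisj : Disjoint Ofin (Finset.Icc 1 (2*k) \ Ofin) := Finset.disjoint_sdiff
  have hcard_m_O : (Ofin.filter fun x => (gammaOrbit m x).ncard = 2*ℓ).card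
      = if ℓ = ℓ0 + 1 then 2*ℓ0 else 0 := by
    by_cases hℓ : ℓ = ℓ0 + 1
    · subst hℓ
      rw [if_pos rfl, Finset.filter_true_of_mem, hcardO]
      intro x hx
      rw [merge_ncard_of_memO hA hd ((hmemO x).mp hx)]; ring
    · rw [if_neg hℓ, Finset.filter_false_of_mem, Finset.card_empty]
      intro x hx hc
      rw [merge_ncard_of_memO hA hd ((hmemO x).mp hx)] at hc; omega
  have hcard_n_O : (Ofin.filter fun x => (gammaOrbit (mergeDown m) x).ncard = 2*ℓ).card
      = if ℓ = ℓ0 then 2*ℓ0 else 0 := by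
    by_cases hℓ : ℓ = ℓ0
    · subst hℓ
      rw [if_pos rfl, Finset.filter_true_of_mem, hcardO]
      intro x hx
      rw [merge_ncard_down_of_memO hA hd ((hmemO x).mp hx)]
    · rw [if_neg hℓ, Finset.filter_false_of_mem, Finset.card_empty]
      intro x hx hc
      rw [merge_ncard_down_of_memO hA hd ((hmemO x).mp hx)] at hc; omega
  have hrest : ((Finset.Icc 1 (2*k) \ Ofin).filter fun x => (gammaOrbit m x).ncard = 2*ℓ)
      = ((Finset.Icc 1 (2*k) \ Ofin).filter
          fun x => (gammaOrbit (mergeDown m) x).ncard = 2*ℓ) := by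
    apply Finset.filter_congr
    intro x hx
    rw [Finset.mem_sdiff] at hx
    rw [gammaOrbit_merge_away hA (mem_IccS_iff.mpr hx.1) (fun hc => hx.2 ((hmemO x).mpr hc))]
  conv_lhs => rw [hsplit]
  conv_rhs => rw [hsplit]
  rw [Finset.filter_union, Finset.filter_union,
    Finset.card_union_of_disjoint (Finset.disjoint_filter_filter hdisj),
    Finset.card_union_of_disjoint (Finset.disjoint_filter_filter hdisj),
    hcard_m_O, hcard_n_O, hrest]
  split_ifs <;> omega

lemma cycleCount_eq (m' : PairPartition (k+1)) (ℓ : ℕ) : cycleCount m' ℓ =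
    ((Finset.Icc 1 (2*(k+1))).filter fun x => (gammaOrbit m' x).ncard = 2*ℓ).card / (2*ℓ) :=
  rfl

lemma cycleCount_eq' (m' : PairPartition k) (ℓ : ℕ) : cycleCount m' ℓ =
    ((Finset.Icc 1 (2*k)).filter fun x => (gammaOrbit m' x).ncard = 2*ℓ).card / (2*ℓ) :=
  rfl

lemma cycleCount_merge_other (hd : (mergeO m).ncard = 2*ℓ0) {ℓ : ℕ} (h1 : ℓ ≠ ℓ0)
    (h2 : ℓ ≠ ℓ0 + 1) : cycleCount m ℓ = cycleCount (mergeDown m) ℓ := by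
  have h := card_filter_merge hA hd ℓ
  rw [if_neg h1, if_neg h2] at h
  simp only [Nat.add_zero] at h
  rw [cycleCount_eq hA m ℓ, cycleCount_eq' hA (mergeDown m) ℓ, h]

lemma cycleCount_merge_hi (hd : (mergeO m).ncard = 2*ℓ0) :
    cycleCount m (ℓ0 + 1) = cycleCount (mergeDown m) (ℓ0 + 1) + 1 := by
  have h := card_filter_merge hA hd (ℓ0 + 1)
  rw [if_neg (by omega), if_pos rfl] at h
  rw [cycleCount_eq hA m _, cycleCount_eq' hA (mergeDown m) _]
  have h2 : 2*(ℓ0+1) = 2*ℓ0+2 := by ring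
  rw [h2] at h ⊢
  rw [Nat.add_zero] at h
  rw [h, Nat.add_div_right _ (by omega)]

lemma cycleCount_merge_lo (hd : (mergeO m).ncard = 2*ℓ0) :
    cycleCount (mergeDown m) ℓ0 = cycleCount m ℓ0 + 1 := by
  have h := (card_filter_merge hA hd ℓ0).symm
  rw [if_pos rfl, if_neg (by omega), Nat.add_zero] at h
  rw [cycleCount_eq hA m _, cycleCount_eq' hA (mergeDown m) _]
  have hpos : 0 < 2*ℓ0 := by have := ℓ0_pos hA hd; omega
  rw [h, Nat.add_div_right _ hpos]

end MergeCount

end PairPartition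

namespace PairPartition

open Equiv MulAction Subgroup

variable {k : ℕ}

lemma hct_unique {n : ℕ} {m : PairPartition n} {p q : Nat.Partition n}
    (hp : HasCosetType m p.parts) (hq : HasCosetType m q.parts) : p = q := by
  apply Nat.Partition.ext
  ext a
  rcases Nat.eq_zero_or_pos a with rfl | ha
  · rw [Multiset.count_eq_zero_of_notMem (fun h => absurd (p.parts_pos h) (by omega)),
      Multiset.count_eq_zero_of_notMem (fun h => absurd (q.parts_pos h) (by omega))]
  · rw [hp a ha, hq a ha]

lemma pVec_sum_eq {R : Type*} [CommRing R] (n K : ℕ) (m : PairPartition n) :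
    (∑ p ∈ Finset.univ.filter (fun p : Nat.Partition n => p.parts.card = K),
      (pVec n p.parts : PairPartition n → R) m)
    = if (∃ p : Nat.Partition n, p.parts.card = K ∧ HasCosetType m p.parts)
      then (1 : R) else 0 := by
  classical
  by_cases hex : ∃ p : Nat.Partition n, p.parts.card = K ∧ HasCosetType m p.parts
  · obtain ⟨p₀, hp₀c, hp₀⟩ := hex
    rw [if_pos ⟨p₀, hp₀c, hp₀⟩]
    rw [Finset.sum_eq_single p₀]
    · rw [pVec, if_pos hp₀]
    · intro q hq hne
      rw [pVec, if_neg]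
      intro hqt
      exact hne (hct_unique hqt hp₀)
    · intro hne
      exact absurd (Finset.mem_filter.mpr ⟨Finset.mem_univ p₀, hp₀c⟩) hne
  · rw [if_neg hex]
    apply Finset.sum_eq_zero
    intro q hq
    rw [pVec, if_neg]
    intro hqt
    exact hex ⟨q, (Finset.mem_filter.mp hq).2, hqt⟩

lemma parts_card_le {n : ℕ} (q : Nat.Partition n) : q.parts.card ≤ n := by
  have h := Multiset.card_nsmul_le_sum (s := q.parts) (a := 1)
    (fun x hx => q.parts_pos hx)
  rw [q.parts_sum] at h
  simpa using h

section DownHCT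

set_option linter.unusedSectionVars false

variable {m : PairPartition (k+1)} (hpair : m.f (2*(k+1)-1) = 2*(k+1))

include hpair

lemma hct_cons_one (ν : Multiset ℕ) :
    HasCosetType m (1 ::ₘ ν) ↔ HasCosetType (down m) ν := by
  unfold HasCosetType
  constructor
  · intro h ℓ hℓ
    have h1 := h ℓ hℓ
    rw [Multiset.count_cons, cycleCount_down hpair ℓ] at h1
    split_ifs at h1 <;> omega
  · intro h ℓ hℓ
    have h1 := h ℓ hℓ
    rw [Multiset.count_cons, cycleCount_down hpair ℓ]
    split_ifs <;> omega

lemma hct_mem_one {μ : Multiset ℕ} (h : HasCosetType m μ) : 1 ∈ μ := by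
  apply Multiset.count_pos.mp
  rw [h 1 (le_refl 1), cycleCount_down hpair 1, if_pos rfl]
  omega

lemma exists_partition_down (K : ℕ) :
    (∃ p : Nat.Partition (k+1), p.parts.card = K + 1 ∧ HasCosetType m p.parts) ↔
    (∃ q : Nat.Partition k, q.parts.card = K ∧ HasCosetType (down m) q.parts) := by
  constructor
  · rintro ⟨p, hcard, hct⟩
    have h1 : 1 ∈ p.parts := hct_mem_one hpair hct
    have hν : p.parts = 1 ::ₘ p.parts.erase 1 := (Multiset.cons_erase h1).symm
    refine ⟨⟨p.parts.erase 1, ?_, ?_⟩, ?_, ?_⟩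
    · intro i hi
      exact p.parts_pos (Multiset.mem_of_mem_erase hi)
    · have := p.parts_sum
      rw [hν, Multiset.sum_cons] at this
      omega
    · have := hcard
      rw [hν, Multiset.card_cons] at this
      simpa using this
    · rw [hν] at hct
      exact (hct_cons_one hpair _).mp hct
  · rintro ⟨q, hcard, hct⟩
    refine ⟨⟨1 ::ₘ q.parts, ?_, ?_⟩, ?_, ?_⟩
    · intro i hi
      rcases Multiset.mem_cons.mp hi with rfl | hi
      · omega
      · exact q.parts_pos hi
    · rw [Multiset.sum_cons, q.parts_sum]; omega
    · rw [Multiset.card_cons, hcard]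
    · exact (hct_cons_one hpair _).mpr hct

end DownHCT

section MergeHCT

set_option linter.unusedSectionVars false

variable {m : PairPartition (k+1)} (hA : m.f (2*(k+1)) ≤ 2*k) {ℓ0 : ℕ}
  (hd : (mergeO m).ncard = 2*ℓ0)

include hA hd

lemma hct_cons_merge (ν : Multiset ℕ) :
    HasCosetType m ((ℓ0+1) ::ₘ ν) ↔ HasCosetType (mergeDown m) (ℓ0 ::ₘ ν) := by
  unfold HasCosetType
  have key : ∀ ℓ, 1 ≤ ℓ →
      ((Multiset.count ℓ ((ℓ0+1) ::ₘ ν) = cycleCount m ℓ) ↔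
        (Multiset.count ℓ (ℓ0 ::ₘ ν) = cycleCount (mergeDown m) ℓ)) := by
    intro ℓ hℓ
    rw [Multiset.count_cons, Multiset.count_cons]
    by_cases h1 : ℓ = ℓ0
    · subst h1
      rw [cycleCount_merge_lo hA hd, if_neg (by omega), if_pos rfl]
      constructor <;> omega
    · by_cases h2 : ℓ = ℓ0 + 1
      · subst h2
        rw [cycleCount_merge_hi hA hd, if_pos rfl, if_neg (by omega)]
        constructor <;> omega
      · rw [cycleCount_merge_other hA hd h1 h2, if_neg h1, if_neg h2]
  constructor
  · intro h ℓ hℓ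
    exact (key ℓ hℓ).mp (h ℓ hℓ)
  · intro h ℓ hℓ
    exact (key ℓ hℓ).mpr (h ℓ hℓ)

lemma hct_mem_merge {μ : Multiset ℕ} (h : HasCosetType m μ) : (ℓ0 + 1) ∈ μ := by
  apply Multiset.count_pos.mp
  rw [h (ℓ0+1) (by omega), cycleCount_merge_hi hA hd]
  omega

lemma hct_mem_merge' {ν : Multiset ℕ} (h : HasCosetType (mergeDown m) ν) : ℓ0 ∈ ν := by
  apply Multiset.count_pos.mp
  rw [h ℓ0 (ℓ0_pos hA hd), cycleCount_merge_lo hA hd]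
  omega

lemma exists_partition_merge (K : ℕ) :
    (∃ p : Nat.Partition (k+1), p.parts.card = K ∧ HasCosetType m p.parts) ↔
    (∃ q : Nat.Partition k, q.parts.card = K ∧ HasCosetType (mergeDown m) q.parts) := by
  have hℓ0 : 1 ≤ ℓ0 := ℓ0_pos hA hd
  constructor
  · rintro ⟨p, hcard, hct⟩
    have h1 : (ℓ0+1) ∈ p.parts := hct_mem_merge hA hd hct
    have hν : p.parts = (ℓ0+1) ::ₘ p.parts.erase (ℓ0+1) := (Multiset.cons_erase h1).symm
    refine ⟨⟨ℓ0 ::ₘ p.parts.erase (ℓ0+1), ?_, ?_⟩, ?_, ?_⟩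
    · intro i hi
      rcases Multiset.mem_cons.mp hi with rfl | hi
      · omega
      · exact p.parts_pos (Multiset.mem_of_mem_erase hi)
    · have := p.parts_sum
      rw [hν, Multiset.sum_cons] at this
      rw [Multiset.sum_cons]
      omega
    · have := hcard
      rw [hν, Multiset.card_cons] at this
      rw [Multiset.card_cons]
      omega
    · rw [hν] at hct
      exact (hct_cons_merge hA hd _).mp hct
  · rintro ⟨q, hcard, hct⟩
    have h1 : ℓ0 ∈ q.parts := hct_mem_merge' hA hd hct
    have hν : q.parts = ℓ0 ::ₘ q.parts.erase ℓ0 := (Multiset.cons_erase h1).symm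
    refine ⟨⟨(ℓ0+1) ::ₘ q.parts.erase ℓ0, ?_, ?_⟩, ?_, ?_⟩
    · intro i hi
      rcases Multiset.mem_cons.mp hi with rfl | hi
      · omega
      · exact q.parts_pos (Multiset.mem_of_mem_erase hi)
    · have := q.parts_sum
      rw [hν, Multiset.sum_cons] at this
      rw [Multiset.sum_cons]
      omega
    · have := hcard
      rw [hν, Multiset.card_cons] at this
      rw [Multiset.card_cons]
      omega
    · rw [hν] at hct
      exact (hct_cons_merge hA hd _).mpr hct

end MergeHCT

end PairPartition

namespace PairPartition

open Equiv MulAction Subgroup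

variable {k : ℕ}

lemma down_triv : down (triv (k+1)) = triv k := by
  apply ext'
  have hp : (triv (k+1)).f (2*(k+1)-1) = 2*(k+1) := triv_f_pred (by omega)
  rw [down_f hp]
  funext x
  by_cases hx : x = 2*(k+1)-1 ∨ x = 2*(k+1)
  · rw [if_pos hx]
    show _ = trivFun k x
    unfold trivFun
    rw [if_neg (by omega)]
  · rw [if_neg hx]
    by_cases hx2 : 1 ≤ x ∧ x ≤ 2*k
    · exact triv_f_agree hx2.2
    · show trivFun (k+1) x = trivFun k x
      unfold trivFun
      rw [if_neg (by omega), if_neg (by omega)]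

lemma not_pair_iff {m : PairPartition (k+1)} :
    ¬ (m.f (2*(k+1)-1) = 2*(k+1)) ↔ m.f (2*(k+1)) ≤ 2*k := by
  have h1 := f_range m (a := 2*(k+1)) (by omega) (by omega)
  have h2 : m.f (2*(k+1)) ≠ 2*(k+1) := f_ne m (by omega) (by omega)
  constructor
  · intro h
    have h3 : m.f (2*(k+1)) ≠ 2*(k+1)-1 := by
      intro hc
      apply h
      conv_lhs => rw [← hc, m.invol]
    omega
  · intro h hc
    have : m.f (2*(k+1)) = 2*(k+1)-1 := by
      conv_lhs => rw [← hc, m.invol]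
    omega

lemma eq_triv_iff {m : PairPartition (k+1)} :
    m = triv (k+1) ↔ (m.f (2*(k+1)-1) = 2*(k+1) ∧ down m = triv k) := by
  constructor
  · rintro rfl
    exact ⟨triv_f_pred (by omega), down_triv⟩
  · rintro ⟨hp, hd⟩
    apply ext'
    funext x
    by_cases hx1 : x = 2*(k+1)-1
    · subst hx1
      rw [hp]
      exact (triv_f_pred (by omega)).symm
    · by_cases hx2 : x = 2*(k+1)
      · subst hx2
        rw [f_top hp]
        exact (triv_f_top (by omega)).symm
      · by_cases hx3 : 1 ≤ x ∧ x ≤ 2*k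
        · have h1 : m.f x = (down m).f x := (down_f_apply hp hx3.2).symm
          rw [h1, hd]
          exact (triv_f_agree hx3.2).symm
        · rw [f_fix m (by omega)]
          show _ = trivFun (k+1) x
          unfold trivFun
          rw [if_neg (by omega)]

section Descend

set_option linter.unusedSectionVars false

variable {R : Type*} [CommRing R] (b : R)

/-- `v` on `𝒫_{k+1}` descends to `w` on `𝒫_k`. -/
def Descends (v : PairPartition (k+1) → R) (w : PairPartition k → R) : Prop :=
  ∀ m : PairPartition (k+1),
    v m = if m.f (2*(k+1)-1) = 2*(k+1) then w (down m) else 0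

lemma basis_descend :
    Descends (basisVec (k+1) (triv (k+1)) : PairPartition (k+1) → R)
      (basisVec k (triv k)) := by
  intro m
  by_cases hp : m.f (2*(k+1)-1) = 2*(k+1)
  · rw [if_pos hp]
    show (if m = triv (k+1) then (1:R) else 0) = (if down m = triv k then (1:R) else 0)
    by_cases he : m = triv (k+1)
    · rw [if_pos he, if_pos (eq_triv_iff.mp he).2]
    · rw [if_neg he, if_neg (fun hc => he (eq_triv_iff.mpr ⟨hp, hc⟩))]
  · rw [if_neg hp]
    show (if m = triv (k+1) then (1:R) else 0) = 0
    rw [if_neg (fun hc => hp (eq_triv_iff.mp hc).1)]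

lemma rot_mapsTo (m' : PairPartition k) : Set.MapsTo (rot m') (IccS k) (IccS k) :=
  fun y hy => perm_mapsTo m' (perm_mapsTo (triv k) hy)

lemma down_f_apply2 {m : PairPartition (k+1)} (h : m.f (2*(k+1)-1) = 2*(k+1)) {x : ℕ}
    (hx1 : x ≠ 2*(k+1)-1) (hx2 : x ≠ 2*(k+1)) : (down m).f x = m.f x := by
  rw [down_f h]
  simp only []
  rw [if_neg (not_or.mpr ⟨hx1, hx2⟩)]

lemma charge_down {m : PairPartition (k+1)} (hp : m.f (2*(k+1)-1) = 2*(k+1))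
    {x : ℕ} (hx : x ∈ IccS k) : (charge m x ↔ charge (down m) x) := by
  have hx2 : 1 ≤ x ∧ x ≤ 2*k := hx
  have hx' : x ∈ IccS (k+1) := ⟨hx2.1, by omega⟩
  have horb : gammaOrbit m x = gammaOrbit (down m) x := gammaOrbit_down hp hx
  have hfin : (gammaOrbit m x).Finite :=
    (IccS_finite (k+1)).subset (gammaOrbit_subset_IccS m hx')
  have hM_mem : sSup (gammaOrbit m x) ∈ gammaOrbit m x :=
    Set.Nonempty.csSup_mem ⟨x, mem_gammaOrbit_self m x⟩ hfin
  have hM_Icc : sSup (gammaOrbit m x) ∈ IccS k := by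
    apply gammaOrbit_subset_IccS (down m) hx
    rw [← horb]
    exact hM_mem
  have hsup : sSup (gammaOrbit (down m) x) = sSup (gammaOrbit m x) := by rw [horb]
  have hzorb : zOrb m (sSup (gammaOrbit m x)) = zOrb (down m) (sSup (gammaOrbit m x)) := by
    apply zOrb_congr (IccS_finite k) (rot_mapsTo (down m)) ?_ hM_Icc
    intro y hy
    have hy2 : 1 ≤ y ∧ y ≤ 2*k := hy
    show rot m y = rot (down m) y
    have h1 : rot m y = m.f ((triv (k+1)).f y) := rfl
    have h2 : rot (down m) y = (down m).f ((triv k).f y) := rfl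
    rw [h1, h2, triv_f_agree hy2.2,
      down_f_apply hp (f_range (triv k) hy2.1 hy2.2).2]
  rw [charge_iff, charge_iff, hsup, hzorb]

lemma swap_ne_top {a j x : ℕ} (ha : a ≤ 2*k) (hj : j ≤ 2*k)
    (hx1 : x ≠ 2*(k+1)-1) (hx2 : x ≠ 2*(k+1)) :
    Equiv.swap a j x ≠ 2*(k+1)-1 ∧ Equiv.swap a j x ≠ 2*(k+1) := by
  rcases eq_or_ne x a with rfl | hxa
  · rw [Equiv.swap_apply_left]; omega
  rcases eq_or_ne x j with rfl | hxj
  · rw [Equiv.swap_apply_right]; omega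
  · rw [Equiv.swap_apply_of_ne_of_ne hxa hxj]; exact ⟨hx1, hx2⟩

lemma swapAct_down_comm {m : PairPartition (k+1)} (hp : m.f (2*(k+1)-1) = 2*(k+1))
    {a j : ℕ} (ha1 : 1 ≤ a) (ha : a ≤ 2*k) (hj1 : 1 ≤ j) (hj : j ≤ 2*k) :
    down (swapAct a j m) = swapAct a j (down m) := by
  have hs1 : Equiv.swap a j (2*(k+1)-1) = 2*(k+1)-1 :=
    Equiv.swap_apply_of_ne_of_ne (by omega) (by omega)
  have hs2 : Equiv.swap a j (2*(k+1)) = 2*(k+1) :=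
    Equiv.swap_apply_of_ne_of_ne (by omega) (by omega)
  have hnp : (swapAct a j m).f (2*(k+1)-1) = 2*(k+1) := by
    rw [swapAct_f ha1 (by omega) hj1 (by omega)]
    simp only []
    rw [hs1, hp, hs2]
  apply ext'
  funext x
  rw [down_f hnp]
  simp only []
  rw [swapAct_f ha1 ha hj1 hj]
  simp only []
  by_cases hx : x = 2*(k+1)-1 ∨ x = 2*(k+1)
  · rw [if_pos hx]
    have hx' : 2*k+1 ≤ x ∧ x ≤ 2*k+2 := by rcases hx with rfl | rfl <;> constructor <;> omega
    have hsx : Equiv.swap a j x = x :=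
      Equiv.swap_apply_of_ne_of_ne (by omega) (by omega)
    rw [hsx, f_fix (down m) (by omega), hsx]
  · rw [if_neg hx]
    push_neg at hx
    have hsx := swap_ne_top (k := k) (j := j) ha (by omega) hx.1 hx.2
    rw [swapAct_f ha1 (by omega) hj1 (by omega)]
    simp only []
    rw [down_f_apply2 hp hsx.1 hsx.2]

lemma jbop_descend {i : ℕ} (hi1 : 1 ≤ i) (hik : i ≤ k) {v : PairPartition (k+1) → R}
    {w : PairPartition k → R} (hvw : Descends v w) :
    Descends (JbOp b i v) (JbOp b i w) := by
  intro m
  by_cases hp : m.f (2*(k+1)-1) = 2*(k+1)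
  · rw [if_pos hp]
    show ∑ a ∈ Finset.Icc 1 (2*i-2), _ = ∑ a ∈ Finset.Icc 1 (2*i-2), _
    apply Finset.sum_congr rfl
    intro a ha
    rw [Finset.mem_Icc] at ha
    have hsw : down (swapAct a (2*i-1) m) = swapAct a (2*i-1) (down m) :=
      swapAct_down_comm hp ha.1 (by omega) (by omega) (by omega)
    have hs1 : Equiv.swap a (2*i-1) (2*(k+1)-1) = 2*(k+1)-1 :=
      Equiv.swap_apply_of_ne_of_ne (by omega) (by omega)
    have hs2 : Equiv.swap a (2*i-1) (2*(k+1)) = 2*(k+1) :=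
      Equiv.swap_apply_of_ne_of_ne (by omega) (by omega)
    have hswp : (swapAct a (2*i-1) m).f (2*(k+1)-1) = 2*(k+1) := by
      rw [swapAct_f ha.1 (by omega) (by omega) (by omega)]
      simp only []
      rw [hs1, hp, hs2]
    have hval : v (swapAct a (2*i-1) m) = w (swapAct a (2*i-1) (down m)) := by
      rw [hvw _, if_pos hswp, hsw]
    have homega : omegab b m a (2*i-1) = omegab b (down m) a (2*i-1) := by
      unfold omegab
      rw [if_congr (iff_congr (charge_down hp ⟨ha.1, by omega⟩)
        (charge_down hp ⟨by omega, by omega⟩)) rfl rfl]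
    rw [hval, homega]
  · rw [if_neg hp]
    apply Finset.sum_eq_zero
    intro a ha
    rw [Finset.mem_Icc] at ha
    have hs1 : Equiv.swap a (2*i-1) (2*(k+1)-1) = 2*(k+1)-1 :=
      Equiv.swap_apply_of_ne_of_ne (by omega) (by omega)
    have hswp : (swapAct a (2*i-1) m).f (2*(k+1)-1) ≠ 2*(k+1) := by
      rw [swapAct_f ha.1 (by omega) (by omega) (by omega)]
      simp only []
      rw [hs1]
      exact (swap_ne_top (k := k) (by omega) (by omega)
        (f_ne m (by omega) (by omega)) hp).2
    rw [hvw _, if_neg hswp, mul_zero]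

lemma swapAct_top_pair_iff {m : PairPartition (k+1)} {a : ℕ} (ha1 : 1 ≤ a)
    (ha2 : a ≤ 2*k) :
    ((swapAct a (2*(k+1)-1) m).f (2*(k+1)-1) = 2*(k+1)) ↔ m.f a = 2*(k+1) := by
  rw [swapAct_f ha1 (by omega) (by omega) (by omega)]
  simp only []
  rw [Equiv.swap_apply_right]
  constructor
  · intro hc
    by_cases h1 : m.f a = a
    · rw [h1, Equiv.swap_apply_left] at hc
      omega
    · rcases eq_or_ne (m.f a) (2*(k+1)-1) with h2 | h2
      · rw [h2, Equiv.swap_apply_right] at hc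
        omega
      · rwa [Equiv.swap_apply_of_ne_of_ne h1 h2] at hc
  · intro hc
    rw [hc]
    exact Equiv.swap_apply_of_ne_of_ne (by omega) (by omega)

lemma jbop_top_eval {v : PairPartition (k+1) → R} {w : PairPartition k → R}
    (hvw : Descends v w) (m : PairPartition (k+1)) :
    JbOp b (k+1) v m = if m.f (2*(k+1)) ≤ 2*k then w (mergeDown m) else 0 := by
  by_cases hA : m.f (2*(k+1)) ≤ 2*k
  · rw [if_pos hA]
    show ∑ a ∈ Finset.Icc 1 (2*(k+1)-2), _ = _
    rw [Finset.sum_eq_single (m.f (2*(k+1)))]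
    · have h1 : omegab b m (m.f (2*(k+1))) (2*(k+1)-1) = 1 :=
        omegab_eq_one b m (by omega) (fA_pos) (by omega) (fA_invol)
      rw [h1, one_mul, hvw _, if_pos (swapA_pair hA)]
      rfl
    · intro a ha hne
      rw [Finset.mem_Icc] at ha
      have hnp : ¬ ((swapAct a (2*(k+1)-1) m).f (2*(k+1)-1) = 2*(k+1)) := by
        rw [swapAct_top_pair_iff ha.1 (by omega)]
        intro hc
        apply hne
        rw [← hc, m.invol]
      rw [hvw _, if_neg hnp, mul_zero]
    · intro hnot
      exact absurd (Finset.mem_Icc.mpr ⟨fA_pos, by omega⟩) hnot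
  · rw [if_neg hA]
    apply Finset.sum_eq_zero
    intro a ha
    rw [Finset.mem_Icc] at ha
    have htop : m.f (2*(k+1)) = 2*(k+1)-1 := by
      have h1 := f_range m (a := 2*(k+1)) (by omega) (by omega)
      have h2 : m.f (2*(k+1)) ≠ 2*(k+1) := f_ne m (by omega) (by omega)
      omega
    have hnp : ¬ ((swapAct a (2*(k+1)-1) m).f (2*(k+1)-1) = 2*(k+1)) := by
      rw [swapAct_top_pair_iff ha.1 (by omega)]
      intro hc
      have : a = 2*(k+1)-1 := by
        rw [← htop, ← hc, m.invol]
      omega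
    rw [hvw _, if_neg hnp, mul_zero]

lemma foldl_descend_aux (l : List ℕ) (hl : ∀ i ∈ l, 1 ≤ i ∧ i ≤ k)
    {v : PairPartition (k+1) → R} {w : PairPartition k → R} (hvw : Descends v w) :
    Descends (l.foldl (fun v i => JbOp b i v) v) (l.foldl (fun v i => JbOp b i v) w) := by
  induction l generalizing v w with
  | nil => exact hvw
  | cons i l ih =>
    rw [List.foldl_cons, List.foldl_cons]
    exact ih (fun j hj => hl j (List.mem_cons_of_mem i hj))
      (jbop_descend b (hl i List.mem_cons_self).1 (hl i List.mem_cons_self).2 hvw)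

end Descend

end PairPartition

namespace PairPartition

open Equiv MulAction Subgroup

variable {k : ℕ}

lemma pp_zero_eq (m : PairPartition 0) : m = triv 0 := by
  apply ext'
  funext x
  rw [f_fix m (by omega)]
  show x = trivFun 0 x
  unfold trivFun
  rw [if_neg (by omega)]

lemma cycleCount_zero (m : PairPartition 0) (ℓ : ℕ) : cycleCount m ℓ = 0 := by
  show ((Finset.Icc 1 (2*0)).filter _).card / (2*ℓ) = 0
  rw [show (Finset.Icc 1 (2*0) : Finset ℕ) = ∅ from Finset.Icc_eq_empty (by omega),
    Finset.filter_empty, Finset.card_empty, Nat.zero_div]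

lemma no_partition_card_zero {n : ℕ} (hn : 1 ≤ n) (p : Nat.Partition n) :
    p.parts.card ≠ 0 := by
  intro hc
  have h1 : p.parts = 0 := Multiset.card_eq_zero.mp hc
  have h2 := p.parts_sum
  rw [h1] at h2
  simp at h2
  omega

lemma sort_insert_top {S : Finset ℕ} (hS : ∀ x ∈ S, x ≤ k) (hk : k+1 ∉ S) :
    (insert (k+1) S).sort (· ≤ ·) = S.sort (· ≤ ·) ++ [k+1] := by
  apply List.Perm.eq_of_pairwise' (Finset.pairwise_sort _ _) ?_ ?_
  · rw [List.pairwise_append]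
    refine ⟨Finset.pairwise_sort _ _, List.pairwise_singleton _ _, ?_⟩
    intro x hx y hy
    rw [List.mem_singleton] at hy
    subst hy
    have := hS x ((Finset.mem_sort _).mp hx)
    omega
  · rw [← Multiset.coe_eq_coe]
    have h1 : ((insert (k+1) S).sort (· ≤ ·) : Multiset ℕ) = (insert (k+1) S).val :=
      Finset.sort_eq _ _
    have h3 : ((S.sort (· ≤ ·) ++ [k+1] : List ℕ) : Multiset ℕ)
        = (S.val : Multiset ℕ) + {k+1} := by
      have h4 : ((S.sort (· ≤ ·) ++ [k+1] : List ℕ) : Multiset ℕ)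
          = ((S.sort (· ≤ ·) : List ℕ) : Multiset ℕ) + ({k+1} : Multiset ℕ) := rfl
      rw [h4, Finset.sort_eq]
    rw [h1, h3, Finset.insert_val_of_notMem hk, ← Multiset.singleton_add, add_comm]

lemma main_aux {R : Type*} [CommRing R] (b : R) :
    ∀ (k : ℕ), ∀ r ≤ k, ∀ m : PairPartition k,
    (∑ s ∈ Finset.powersetCard r (Finset.Icc 1 k),
      (s.sort (· ≤ ·)).foldl (fun v i => JbOp b i v) (basisVec k (triv k))) m
    = if (∃ p : Nat.Partition k, p.parts.card = k - r ∧ HasCosetType m p.parts)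
      then (1:R) else 0 := by
  intro k
  induction k with
  | zero =>
    intro r hr m
    interval_cases r
    simp only [Finset.powersetCard_zero, Finset.sum_singleton, Finset.sort_empty,
      List.foldl_nil]
    have h2 : basisVec 0 (triv 0) m = (1:R) := by
      show (if m = triv 0 then (1:R) else 0) = 1
      rw [if_pos (pp_zero_eq m)]
    rw [h2, if_pos]
    refine ⟨⟨0, ?_, ?_⟩, ?_, ?_⟩
    · intro i hi
      exact absurd hi (Multiset.notMem_zero i)
    · rfl
    · rfl
    · intro ℓ hℓ
      rw [cycleCount_zero, Multiset.count_zero]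
  | succ k ih =>
    intro r hr m
    classical
    have hIcc : Finset.Icc 1 (k+1) = insert (k+1) (Finset.Icc 1 k) := by
      ext x
      simp only [Finset.mem_Icc, Finset.mem_insert]
      omega
    have hnot : (k+1) ∉ Finset.Icc 1 k := by simp [Finset.mem_Icc]
    have hdesc : ∀ s : Finset ℕ, s ⊆ Finset.Icc 1 k →
        Descends
          ((s.sort (· ≤ ·)).foldl (fun v i => JbOp b i v)
            (basisVec (k+1) (triv (k+1)) : PairPartition (k+1) → R))
          ((s.sort (· ≤ ·)).foldl (fun v i => JbOp b i v) (basisVec k (triv k))) := by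
      intro s hs
      apply foldl_descend_aux
      · intro i hi
        have h2 := hs ((Finset.mem_sort _).mp hi)
        rw [Finset.mem_Icc] at h2
        exact h2
      · exact basis_descend
    rcases Nat.eq_zero_or_pos r with rfl | hrpos
    · -- r = 0
      simp only [Finset.powersetCard_zero, Finset.sum_singleton, Finset.sort_empty,
        List.foldl_nil, Nat.sub_zero]
      have hd := basis_descend (R := R) (k := k) m
      rw [hd]
      by_cases hp : m.f (2*(k+1)-1) = 2*(k+1)
      · rw [if_pos hp]
        have hIH := ih 0 (Nat.zero_le k) (down m)
        simp only [Finset.powersetCard_zero, Finset.sum_singleton, Finset.sort_empty,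
          List.foldl_nil, Nat.sub_zero] at hIH
        rw [hIH]
        have hiff := exists_partition_down hp k
        exact if_congr hiff.symm rfl rfl
      · rw [if_neg hp, if_neg]
        rintro ⟨p, hc, hct⟩
        have hA : m.f (2*(k+1)) ≤ 2*k := not_pair_iff.mp hp
        obtain ⟨ℓ0, hd0⟩ : ∃ t, (mergeO m).ncard = 2*t := by
          have hev : Even ((mergeO m).ncard) := gammaOrbit_ncard_even (mergeDown m)
            (⟨fA_pos, hA⟩ : m.f (2*(k+1)) ∈ IccS k)
          obtain ⟨t, ht⟩ := hev
          exact ⟨t, by omega⟩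
        obtain ⟨q, hq, _⟩ := (exists_partition_merge hA hd0 (k+1)).mp ⟨p, hc, hct⟩
        have := parts_card_le q
        omega
    · obtain ⟨r', rfl⟩ : ∃ r', r = r' + 1 := ⟨r - 1, by omega⟩
      have hdisj : Disjoint (Finset.powersetCard (r'+1) (Finset.Icc 1 k))
          ((Finset.powersetCard r' (Finset.Icc 1 k)).image (insert (k+1))) := by
        rw [Finset.disjoint_right]
        intro s hs1 hs2
        obtain ⟨t, ht, rfl⟩ := Finset.mem_image.mp hs1
        have hsub := (Finset.mem_powersetCard.mp hs2).1
        have h3 := hsub (Finset.mem_insert_self (k+1) t)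
        rw [Finset.mem_Icc] at h3
        omega
      have hinj : ∀ x ∈ Finset.powersetCard r' (Finset.Icc 1 k),
          ∀ y ∈ Finset.powersetCard r' (Finset.Icc 1 k),
          insert (k+1) x = insert (k+1) y → x = y := by
        intro x hx y hy hxy
        have hx' : (k+1) ∉ x := by
          intro hc
          have := (Finset.mem_powersetCard.mp hx).1 hc
          rw [Finset.mem_Icc] at this
          omega
        have hy' : (k+1) ∉ y := by
          intro hc
          have := (Finset.mem_powersetCard.mp hy).1 hc
          rw [Finset.mem_Icc] at this
          omega
        rw [← Finset.erase_insert hx', ← Finset.erase_insert hy', hxy]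
      rw [hIcc, Finset.powersetCard_succ_insert hnot]
      rw [Finset.sum_union hdisj]
      simp only [Finset.sum_apply, Pi.add_apply]
      rw [Finset.sum_image hinj]
      have hterm : ∀ t ∈ Finset.powersetCard r' (Finset.Icc 1 k),
          ((insert (k+1) t).sort (· ≤ ·)).foldl (fun v i => JbOp b i v)
            (basisVec (k+1) (triv (k+1)) : PairPartition (k+1) → R) m
          = if m.f (2*(k+1)) ≤ 2*k
            then (t.sort (· ≤ ·)).foldl (fun v i => JbOp b i v)
              (basisVec k (triv k)) (mergeDown m)
            else 0 := by
        intro t ht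
        obtain ⟨hsub, hcard⟩ := Finset.mem_powersetCard.mp ht
        have hsort : (insert (k+1) t).sort (· ≤ ·) = t.sort (· ≤ ·) ++ [k+1] := by
          apply sort_insert_top
          · intro x hx
            have := hsub hx
            rw [Finset.mem_Icc] at this
            omega
          · intro hc
            have := hsub hc
            rw [Finset.mem_Icc] at this
            omega
        rw [hsort, List.foldl_append, List.foldl_cons, List.foldl_nil]
        exact jbop_top_eval b (hdesc t hsub) m
      by_cases hp : m.f (2*(k+1)-1) = 2*(k+1)
      · -- pair case
        have hA' : ¬ (m.f (2*(k+1)) ≤ 2*k) := fun h => (not_pair_iff.mpr h) hp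
        have h2 : ∑ t ∈ Finset.powersetCard r' (Finset.Icc 1 k),
            ((insert (k+1) t).sort (· ≤ ·)).foldl (fun v i => JbOp b i v)
              (basisVec (k+1) (triv (k+1)) : PairPartition (k+1) → R) m = 0 := by
          apply Finset.sum_eq_zero
          intro t ht
          rw [hterm t ht, if_neg hA']
        have h1 : ∑ s ∈ Finset.powersetCard (r'+1) (Finset.Icc 1 k),
            (s.sort (· ≤ ·)).foldl (fun v i => JbOp b i v)
              (basisVec (k+1) (triv (k+1)) : PairPartition (k+1) → R) m
            = ∑ s ∈ Finset.powersetCard (r'+1) (Finset.Icc 1 k),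
              (s.sort (· ≤ ·)).foldl (fun v i => JbOp b i v) (basisVec k (triv k))
                (down m) := by
          apply Finset.sum_congr rfl
          intro s hs
          rw [hdesc s (Finset.mem_powersetCard.mp hs).1 m, if_pos hp]
        rw [h2, h1, add_zero]
        rcases Nat.lt_or_ge k (r'+1) with hk1 | hk1
        · rw [Finset.powersetCard_eq_empty.mpr (by rw [Nat.card_Icc]; omega),
            Finset.sum_empty]
          rw [if_neg]
          rintro ⟨p, hc, hct⟩
          have he : r' + 1 = k + 1 := by omega
          rw [he, Nat.sub_self] at hc
          exact no_partition_card_zero (by omega) p hc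
        · have hIH := ih (r'+1) hk1 (down m)
          rw [Finset.sum_apply] at hIH
          rw [hIH]
          have hiff := exists_partition_down hp (k - (r'+1))
          rw [show k - (r'+1) + 1 = k + 1 - (r'+1) from by omega] at hiff
          exact if_congr hiff.symm rfl rfl
      · -- merge case
        have hA : m.f (2*(k+1)) ≤ 2*k := not_pair_iff.mp hp
        obtain ⟨ℓ0, hd0⟩ : ∃ t, (mergeO m).ncard = 2*t := by
          have hev : Even ((mergeO m).ncard) := gammaOrbit_ncard_even (mergeDown m)
            (⟨fA_pos, hA⟩ : m.f (2*(k+1)) ∈ IccS k)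
          obtain ⟨t, ht⟩ := hev
          exact ⟨t, by omega⟩
        have h1 : ∑ s ∈ Finset.powersetCard (r'+1) (Finset.Icc 1 k),
            (s.sort (· ≤ ·)).foldl (fun v i => JbOp b i v)
              (basisVec (k+1) (triv (k+1)) : PairPartition (k+1) → R) m = 0 := by
          apply Finset.sum_eq_zero
          intro s hs
          rw [hdesc s (Finset.mem_powersetCard.mp hs).1 m, if_neg hp]
        have h2 : ∑ t ∈ Finset.powersetCard r' (Finset.Icc 1 k),
            ((insert (k+1) t).sort (· ≤ ·)).foldl (fun v i => JbOp b i v)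
              (basisVec (k+1) (triv (k+1)) : PairPartition (k+1) → R) m
            = ∑ t ∈ Finset.powersetCard r' (Finset.Icc 1 k),
              (t.sort (· ≤ ·)).foldl (fun v i => JbOp b i v) (basisVec k (triv k))
                (mergeDown m) := by
          apply Finset.sum_congr rfl
          intro t ht
          rw [hterm t ht, if_pos hA]
        rw [h1, h2, zero_add]
        have hIH := ih r' (by omega) (mergeDown m)
        rw [Finset.sum_apply] at hIH
        rw [hIH]
        rw [show k + 1 - (r'+1) = k - r' from by omega]
        exact if_congr (exists_partition_merge hA hd0 (k - r')).symm rfl rfl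

end PairPartition


/-- **Elementary symmetric functions of the `b`-deformed Jucys–Murphy operators**
(Proposition 4.24, first part).  Let `k ≥ 1` and `0 ≤ r ≤ k`.  In the free
`ℤ[b]`-module with basis `𝒫_k`,
`∑_{k ≥ i₁ > ⋯ > i_r ≥ 1} 𝒥_{i₁} ⋯ 𝒥_{i_r} (𝔢_k) = ∑_{λ ⊢ k, ℓ(λ) = k-r} 𝔭_λ`
(the sum on the left being over `r`-element subsets of `{1, …, k}`, the operators
applied in decreasing order of index). -/
theorem elementary_symmetric_bJucysMurphy
    (k r : ℕ) (hk : 1 ≤ k) (hr : r ≤ k) :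
    ∑ s ∈ Finset.powersetCard r (Finset.Icc 1 k),
      (s.sort (· ≤ ·)).foldl
        (fun v i => JbOp (Polynomial.X : Polynomial ℤ) i v)
        (basisVec k (triv k))
    = ∑ p ∈ Finset.univ.filter (fun p : Nat.Partition k => p.parts.card = k - r),
        (pVec k p.parts : PairPartition k → Polynomial ℤ) := by
  funext m
  simp only [Finset.sum_apply]
  have h1 := PairPartition.main_aux (Polynomial.X : Polynomial ℤ) k r hr m
  simp only [Finset.sum_apply] at h1
  rw [h1]
  exact (PairPartition.pVec_sum_eq k (k - r) m).symm
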